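/- arXiv:2602.13223 — 9 statements merged into one kernel-verified Lean document; each statement's English description precedes it below -/
import Mathlib

section
/- Let N ≥ 1 and let B' and C' be N×N complex matrices. The 2N×2N companion matrix K = [[0, 1], [−C', −B']] is diagonalizable over ℂ (i.e., there exist an invertible complex matrix T and a complex diagonal matrix D with K = T·D·T⁻¹) if and only if for every σ ∈ ℂ the dimension of the kernel of S(σ) = σ²·1 + σ·B' + C' (the geometric multiplicity) equals the multiplicity of σ as a root of the degree-2N polynomial p(X) = det(X²·1 + X·B' + C') (the algebraic multiplicity). -/
open Matrix Polynomial

section Helpers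

variable {n : Type*} [Fintype n] [DecidableEq n]

private lemma charmatrix_map_eval (M : Matrix n n ℂ) (x : ℂ) :
    (charmatrix M).map (eval x) = x • (1 : Matrix n n ℂ) - M := by
  ext i j
  by_cases h : i = j <;>
    simp [charmatrix_apply, Matrix.diagonal_apply, h, Matrix.one_apply]

private lemma eval_charpoly' (M : Matrix n n ℂ) (x : ℂ) :
    eval x M.charpoly = det (x • (1 : Matrix n n ℂ) - M) := by
  have : eval x M.charpoly = (evalRingHom x) (charmatrix M).det := rfl
  rw [this, RingHom.map_det, ← charmatrix_map_eval M x]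
  rfl

private lemma charpoly_shift (M : Matrix n n ℂ) (σ : ℂ) :
    (M - σ • 1).charpoly = M.charpoly.comp (X + C σ) := by
  apply Polynomial.funext
  intro x
  rw [eval_comp, eval_add, eval_X, eval_C, eval_charpoly', eval_charpoly']
  congr 1
  rw [add_smul]
  abel

private lemma finrank_maxGen_eq_rootMultiplicity (M : Matrix n n ℂ) (σ : ℂ) :
    Module.finrank ℂ (Module.End.maxGenEigenspace M.mulVecLin σ) =
      rootMultiplicity σ M.charpoly := by
  have hg : (M - σ • 1).mulVecLin = M.mulVecLin - σ • (1 : Module.End ℂ (n → ℂ)) := by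
    apply LinearMap.ext
    intro v
    simp [Matrix.sub_mulVec, Matrix.smul_mulVec, Matrix.one_mulVec]
  have h1 : Module.End.maxGenEigenspace M.mulVecLin σ =
      Module.End.maxGenEigenspace (M - σ • 1).mulVecLin 0 := by
    ext v
    simp [Module.End.mem_genEigenspace, hg]
  rw [h1, LinearMap.finrank_maxGenEigenspace_zero_eq]
  have h3 : LinearMap.charpoly (M - σ • 1).mulVecLin = (M - σ • 1).charpoly := by
    rw [← LinearMap.charpoly_toMatrix (M - σ • 1).mulVecLin (Pi.basisFun ℂ n),
      LinearMap.toMatrix_eq_toMatrix', ← Matrix.toLin'_apply', LinearMap.toMatrix'_toLin']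
  rw [h3, charpoly_shift, rootMultiplicity_eq_natTrailingDegree]

private lemma exists_diag_of_iSup_eigenspace (A : Matrix n n ℂ)
    (h : ⨆ μ, Module.End.eigenspace A.mulVecLin μ = ⊤) :
    ∃ (T : Matrix n n ℂ) (d : n → ℂ), IsUnit T.det ∧ A = T * Matrix.diagonal d * T⁻¹ := by
  classical
  set φ := A.mulVecLin with hφ
  set s : Set (n → ℂ) := ⋃ μ, (Module.End.eigenspace φ μ : Set (n → ℂ)) with hs
  have hspan : Submodule.span ℂ s = ⊤ := by
    rw [← Submodule.iSup_eq_span]; exact h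
  obtain ⟨b, hbs, hb, hli⟩ := exists_linearIndependent ℂ s
  rw [hspan] at hb
  let bas : Module.Basis b ℂ (n → ℂ) := Module.Basis.mk hli (by rw [Subtype.range_coe, hb])
  haveI : Fintype b := FiniteDimensional.fintypeBasisIndex bas
  have hcard : Fintype.card n = Fintype.card b := by
    rw [← Module.finrank_eq_card_basis bas, Module.finrank_fintype_fun_eq_card]
  let e : n ≃ b := Fintype.equivOfCardEq hcard
  let b' : Module.Basis n ℂ (n → ℂ) := bas.reindex e.symm
  have hb'mem : ∀ i, ∃ μ : ℂ, φ (b' i) = μ • b' i := by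
    intro i
    have hmem : (b' i : n → ℂ) ∈ s := by
      have : (b' i : n → ℂ) = ((e i : b) : n → ℂ) := by
        simp [b', Module.Basis.reindex_apply, bas, Module.Basis.mk_apply]
      rw [this]
      exact hbs (e i).2
    rw [hs, Set.mem_iUnion] at hmem
    obtain ⟨μ, hμ⟩ := hmem
    exact ⟨μ, Module.End.mem_eigenspace_iff.mp hμ⟩
  choose d hd using hb'mem
  let T : Matrix n n ℂ := (Pi.basisFun ℂ n).toMatrix b'
  haveI : Invertible T := (Pi.basisFun ℂ n).invertibleToMatrix b'
  have hdet : IsUnit T.det := Matrix.isUnit_det_of_invertible T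
  refine ⟨T, d, hdet, ?_⟩
  have hT : ∀ i j, T i j = b' j i := by
    intro i j
    simp [T, Module.Basis.toMatrix_apply, Pi.basisFun_repr]
  have hKT : A * T = T * Matrix.diagonal d := by
    ext i j
    have h1 : (A * T) i j = (A *ᵥ b' j) i := by
      simp [Matrix.mul_apply, Matrix.mulVec, dotProduct, hT]
    rw [h1, Matrix.mul_diagonal, hT i j]
    have h2 : A *ᵥ (b' j) = d j • b' j := hd j
    rw [h2]
    simp [mul_comm]
  calc A = A * T * T⁻¹ := by
        rw [Matrix.mul_assoc, Matrix.mul_nonsing_inv _ hdet, Matrix.mul_one]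
    _ = T * Matrix.diagonal d * T⁻¹ := by rw [hKT]

private lemma isFinitelySemisimple_of_diag (A : Matrix n n ℂ) (T : Matrix n n ℂ) (d : n → ℂ)
    (hdet : IsUnit T.det) (hA : A = T * Matrix.diagonal d * T⁻¹) :
    Module.End.IsFinitelySemisimple A.mulVecLin := by
  classical
  set q : ℂ[X] := ∏ μ ∈ Finset.image d Finset.univ, (X - C μ) with hq
  have hsq : Squarefree q := by
    apply Polynomial.Separable.squarefree
    exact Polynomial.separable_prod_X_sub_C_iff'.mpr (fun x _ y _ h => h)
  have hDzero : aeval (Matrix.diagonal d) q = 0 := by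
    have h1 : Matrix.diagonal d = Matrix.diagonalAlgHom ℂ d := rfl
    rw [h1, aeval_algHom_apply]
    have h2 : aeval d q = 0 := by
      funext i
      have h3 : aeval d q i = aeval (d i) q :=
        (aeval_algHom_apply (Pi.evalAlgHom ℂ (fun _ => ℂ) i) d q).symm
      rw [Pi.zero_apply, h3, hq, map_prod]
      apply Finset.prod_eq_zero (Finset.mem_image_of_mem d (Finset.mem_univ i))
      simp
    rw [h2, map_zero]
  have hTT : T * T⁻¹ = 1 := Matrix.mul_nonsing_inv _ hdet
  have hTT' : T⁻¹ * T = 1 := Matrix.nonsing_inv_mul _ hdet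
  let conj : Matrix n n ℂ →ₐ[ℂ] Matrix n n ℂ :=
    { toFun := fun M => T * M * T⁻¹
      map_one' := by show T * 1 * T⁻¹ = 1; rw [Matrix.mul_one, hTT]
      map_mul' := fun M M' => by
        show T * (M * M') * T⁻¹ = (T * M * T⁻¹) * (T * M' * T⁻¹)
        calc T * (M * M') * T⁻¹ = T * M * (T⁻¹ * T) * M' * T⁻¹ := by
              rw [hTT']; noncomm_ring
          _ = T * M * T⁻¹ * (T * M' * T⁻¹) := by noncomm_ring
      map_zero' := by simp
      map_add' := fun M M' => by
        show T * (M + M') * T⁻¹ = T * M * T⁻¹ + T * M' * T⁻¹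
        rw [Matrix.mul_add, Matrix.add_mul]
      commutes' := fun r => by
        show T * algebraMap ℂ (Matrix n n ℂ) r * T⁻¹ = algebraMap ℂ (Matrix n n ℂ) r
        rw [Algebra.algebraMap_eq_smul_one, Matrix.mul_smul, Matrix.mul_one, Matrix.smul_mul,
          hTT] }
  have hAzero : aeval A q = 0 := by
    have h1 : A = conj (Matrix.diagonal d) := hA
    rw [h1, aeval_algHom_apply, hDzero, map_zero]
  have hφzero : aeval A.mulVecLin q = 0 := by
    have h1 : A.mulVecLin = Matrix.toLinAlgEquiv' A := by
      rw [← Matrix.toLin'_apply']; rfl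
    rw [h1, aeval_algHom_apply, hAzero, map_zero]
  exact (Module.End.isSemisimple_of_squarefree_aeval_eq_zero hsq hφzero).isFinitelySemisimple

end Helpers

section PencilHelpers

variable {N : ℕ}

private lemma eval_pencil (B' C' : Matrix (Fin N) (Fin N) ℂ) (x : ℂ) :
    eval x (((X : ℂ[X]) ^ 2 • (1 : Matrix (Fin N) (Fin N) ℂ[X]) +
        (X : ℂ[X]) • B'.map C + C'.map C).det) =
      det (x ^ 2 • (1 : Matrix (Fin N) (Fin N) ℂ) + x • B' + C') := by
  have : eval x (((X : ℂ[X]) ^ 2 • (1 : Matrix (Fin N) (Fin N) ℂ[X]) +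
        (X : ℂ[X]) • B'.map C + C'.map C).det) =
      ((evalRingHom x).mapMatrix ((X : ℂ[X]) ^ 2 • (1 : Matrix (Fin N) (Fin N) ℂ[X]) +
        (X : ℂ[X]) • B'.map C + C'.map C)).det := by
    rw [← RingHom.map_det]; rfl
  rw [this]
  congr 1
  ext i j
  simp only [RingHom.mapMatrix_apply, Matrix.map_apply, Matrix.add_apply, Matrix.smul_apply,
    Matrix.one_apply, smul_eq_mul, eval_add, eval_mul, eval_pow, eval_X]
  by_cases h : i = j <;> simp [h] <;> ring

private lemma charpoly_companion (B' C' : Matrix (Fin N) (Fin N) ℂ) :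
    (Matrix.fromBlocks (0 : Matrix (Fin N) (Fin N) ℂ) 1 (-C') (-B')).charpoly =
      ((X : ℂ[X]) ^ 2 • (1 : Matrix (Fin N) (Fin N) ℂ[X]) +
        (X : ℂ[X]) • B'.map C + C'.map C).det := by
  apply Polynomial.eq_of_infinite_eval_eq
  apply Set.Infinite.mono (s := {x : ℂ | x ≠ 0})
  · intro x hx
    have hx : (x : ℂ) ≠ 0 := hx
    simp only [Set.mem_setOf_eq]
    rw [eval_charpoly', eval_pencil]
    have hsplit : x • (1 : Matrix (Fin N ⊕ Fin N) (Fin N ⊕ Fin N) ℂ) -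
        Matrix.fromBlocks 0 1 (-C') (-B') =
        Matrix.fromBlocks (x • 1) (-1) C' (x • 1 + B') := by
      ext (i|i) (j|j) <;>
        first
        | (by_cases h : i = j <;> simp [Matrix.one_apply, h])
        | simp [Matrix.one_apply]
    rw [hsplit]
    letI : Invertible (x • (1 : Matrix (Fin N) (Fin N) ℂ)) :=
      ⟨x⁻¹ • 1, by simp [smul_smul, inv_mul_cancel₀ hx, mul_inv_cancel₀ hx],
        by simp [smul_smul, inv_mul_cancel₀ hx, mul_inv_cancel₀ hx]⟩
    rw [Matrix.det_fromBlocks₁₁]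
    have hinv : ⅟(x • (1 : Matrix (Fin N) (Fin N) ℂ)) = x⁻¹ • 1 := rfl
    rw [hinv]
    have h1 : x • (1 : Matrix (Fin N) (Fin N) ℂ) + B' - C' * (x⁻¹ • 1) * (-1) =
        x • 1 + B' + x⁻¹ • C' := by
      simp [Matrix.mul_smul, sub_neg_eq_add]
    rw [h1]
    have h2 : det (x • (1 : Matrix (Fin N) (Fin N) ℂ)) = x ^ Fintype.card (Fin N) := by
      rw [Matrix.det_smul, det_one, mul_one]
    rw [h2, ← Matrix.det_smul]
    congr 1
    rw [smul_add, smul_add, smul_smul, smul_smul, mul_inv_cancel₀ hx, one_smul, ← pow_two]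
  · exact Set.Finite.infinite_compl (Set.finite_singleton 0)

private lemma finrank_eigenspace_eq_finrank_ker (B' C' : Matrix (Fin N) (Fin N) ℂ) (σ : ℂ) :
    Module.finrank ℂ (Module.End.eigenspace
        (Matrix.fromBlocks (0 : Matrix (Fin N) (Fin N) ℂ) 1 (-C') (-B')).mulVecLin σ) =
      Module.finrank ℂ
        (LinearMap.ker (σ ^ 2 • (1 : Matrix (Fin N) (Fin N) ℂ) + σ • B' + C').mulVecLin) := by
  set K := Matrix.fromBlocks (0 : Matrix (Fin N) (Fin N) ℂ) 1 (-C') (-B') with hK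
  set S := σ ^ 2 • (1 : Matrix (Fin N) (Fin N) ℂ) + σ • B' + C' with hS
  set π : ((Fin N ⊕ Fin N) → ℂ) →ₗ[ℂ] (Fin N → ℂ) := LinearMap.funLeft ℂ ℂ Sum.inl with hπ
  set ι : (Fin N → ℂ) →ₗ[ℂ] ((Fin N ⊕ Fin N) → ℂ) :=
    { toFun := fun w => Sum.elim w (σ • w)
      map_add' := fun a b => by funext i; cases i <;> simp [mul_add]
      map_smul' := fun c a => by funext i; cases i <;> simp [mul_left_comm] } with hι
  have key : ∀ v : (Fin N ⊕ Fin N) → ℂ, v ∈ Module.End.eigenspace K.mulVecLin σ ↔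
      ((v ∘ Sum.inr = σ • (v ∘ Sum.inl)) ∧ S *ᵥ (v ∘ Sum.inl) = 0) := by
    intro v
    rw [Module.End.mem_eigenspace_iff]
    have hmv : K.mulVecLin v = K *ᵥ v := rfl
    rw [hmv, hK, Matrix.fromBlocks_mulVec]
    have hSexp : S *ᵥ (v ∘ Sum.inl) =
        σ ^ 2 • (v ∘ Sum.inl) + σ • (B' *ᵥ (v ∘ Sum.inl)) + C' *ᵥ (v ∘ Sum.inl) := by
      rw [hS, Matrix.add_mulVec, Matrix.add_mulVec, Matrix.smul_mulVec,
        Matrix.smul_mulVec, Matrix.one_mulVec]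
    constructor
    · intro hv
      have h1 : v ∘ Sum.inr = σ • (v ∘ Sum.inl) := by
        funext i
        simpa using congr_fun hv (Sum.inl i)
      have h2 : (-C') *ᵥ (v ∘ Sum.inl) + (-B') *ᵥ (v ∘ Sum.inr) = σ • (v ∘ Sum.inr) := by
        funext i
        simpa using congr_fun hv (Sum.inr i)
      refine ⟨h1, ?_⟩
      rw [h1, Matrix.neg_mulVec, Matrix.neg_mulVec, Matrix.mulVec_smul, smul_smul,
        ← pow_two] at h2
      rw [hSexp, ← h2]
      abel
    · rintro ⟨h1, h2⟩
      rw [hSexp] at h2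
      have h3 : -(C' *ᵥ (v ∘ Sum.inl)) + -(σ • (B' *ᵥ (v ∘ Sum.inl))) =
          σ ^ 2 • (v ∘ Sum.inl) := by
        rw [← sub_eq_zero]
        have : -(C' *ᵥ (v ∘ Sum.inl)) + -(σ • (B' *ᵥ (v ∘ Sum.inl))) - σ ^ 2 • (v ∘ Sum.inl) =
            -(σ ^ 2 • (v ∘ Sum.inl) + σ • (B' *ᵥ (v ∘ Sum.inl)) + C' *ᵥ (v ∘ Sum.inl)) := by
          abel
        rw [this, h2, neg_zero]
      have h4 : (-C') *ᵥ (v ∘ Sum.inl) + (-B') *ᵥ (v ∘ Sum.inr) = σ • (v ∘ Sum.inr) := by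
        rw [h1, Matrix.neg_mulVec, Matrix.neg_mulVec, Matrix.mulVec_smul, smul_smul, ← pow_two]
        exact h3
      funext i
      cases i with
      | inl i => simpa using congr_fun h1 i
      | inr i => simpa using congr_fun h4 i
  have hπmem : ∀ v ∈ Module.End.eigenspace K.mulVecLin σ,
      π v ∈ LinearMap.ker S.mulVecLin := by
    intro v hv
    rw [LinearMap.mem_ker]
    exact ((key v).mp hv).2
  have hιmem : ∀ w ∈ LinearMap.ker S.mulVecLin,
      ι w ∈ Module.End.eigenspace K.mulVecLin σ := by
    intro w hw
    rw [LinearMap.mem_ker] at hw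
    apply (key (ι w)).mpr
    constructor
    · funext i; simp [hι]
    · have : (ι w) ∘ Sum.inl = w := by funext i; simp [hι]
      rw [this]; exact hw
  have equiv : (Module.End.eigenspace K.mulVecLin σ) ≃ₗ[ℂ]
      (LinearMap.ker S.mulVecLin) := by
    refine LinearEquiv.ofLinear (π.restrict hπmem) (ι.restrict hιmem) ?_ ?_
    · ext ⟨w, hw⟩
      simp [LinearMap.restrict_apply, hπ, hι, LinearMap.funLeft]
    · ext ⟨v, hv⟩ i
      have h1 := ((key v).mp hv).1
      simp only [LinearMap.coe_comp, Function.comp_apply, LinearMap.restrict_apply,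
        LinearMap.id_coe, id_eq]
      cases i with
      | inl i => simp [hπ, hι, LinearMap.funLeft]
      | inr i =>
        simp only [hπ, hι, LinearMap.funLeft, LinearMap.coe_mk, AddHom.coe_mk, Sum.elim_inr]
        simpa using (congr_fun h1 i).symm
  exact equiv.finrank_eq

end PencilHelpers

/-- the companion matrix `K = [[0, 1], [−C', −B']]` is diagonalizable
over ℂ iff, for every `σ ∈ ℂ`, the geometric multiplicity `dim ker S(σ)` of the
second-order pencil `S(σ) = σ²·1 + σ·B' + C'` equals the algebraic multiplicity
of `σ` as a root of the polynomial `det(X²·1 + X·B' + C')`. -/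
theorem companion_diagonalizable_iff_geometric_eq_algebraic
    (N : ℕ) (hN : 1 ≤ N) (B' C' : Matrix (Fin N) (Fin N) ℂ) :
    (∃ (T : Matrix (Fin N ⊕ Fin N) (Fin N ⊕ Fin N) ℂ) (d : Fin N ⊕ Fin N → ℂ),
        IsUnit T.det ∧
        Matrix.fromBlocks 0 1 (-C') (-B') = T * Matrix.diagonal d * T⁻¹) ↔
      ∀ σ : ℂ,
        Module.finrank ℂ
            (LinearMap.ker
              (σ ^ 2 • (1 : Matrix (Fin N) (Fin N) ℂ) + σ • B' + C').mulVecLin) =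
          Polynomial.rootMultiplicity σ
            (((Polynomial.X : Polynomial ℂ) ^ 2 • (1 : Matrix (Fin N) (Fin N) (Polynomial ℂ)) +
              (Polynomial.X : Polynomial ℂ) • B'.map Polynomial.C + C'.map Polynomial.C).det) := by
  set K := Matrix.fromBlocks (0 : Matrix (Fin N) (Fin N) ℂ) 1 (-C') (-B') with hKdef
  have hcp := charpoly_companion B' C'
  constructor
  · rintro ⟨T, d, hdet, hA⟩ σ
    have hss := isFinitelySemisimple_of_diag K T d hdet hA
    rw [← hcp, ← finrank_maxGen_eq_rootMultiplicity K σ,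
      Module.End.IsFinitelySemisimple.maxGenEigenspace_eq_eigenspace hss σ]
    exact (finrank_eigenspace_eq_finrank_ker B' C' σ).symm
  · intro h
    have heq : ∀ σ : ℂ, Module.End.eigenspace K.mulVecLin σ =
        Module.End.maxGenEigenspace K.mulVecLin σ := by
      intro σ
      apply Submodule.eq_of_le_of_finrank_le
      · exact (Module.End.genEigenspace K.mulVecLin σ).monotone le_top
      · refine le_of_eq ?_
        calc Module.finrank ℂ (Module.End.maxGenEigenspace K.mulVecLin σ)
            = rootMultiplicity σ K.charpoly := finrank_maxGen_eq_rootMultiplicity K σ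
          _ = Module.finrank ℂ (LinearMap.ker
              (σ ^ 2 • (1 : Matrix (Fin N) (Fin N) ℂ) + σ • B' + C').mulVecLin) := by
              rw [hcp]; exact (h σ).symm
          _ = Module.finrank ℂ (Module.End.eigenspace K.mulVecLin σ) :=
              (finrank_eigenspace_eq_finrank_ker B' C' σ).symm
    have hsup : ⨆ μ, Module.End.eigenspace K.mulVecLin μ = ⊤ := by
      have h2 := Module.End.iSup_maxGenEigenspace_eq_top K.mulVecLin
      rw [← h2]
      exact iSup_congr heq
    exact exists_diag_of_iSup_eigenspace K hsup
end

section
/- Let N ≥ 1 and let B' and C' be N×N real matrices with companion matrix K = [[0, 1], [−C', −B']]. Then K is diagonalizable over ℝ if and only if there exist N×N real matrices V₁ and Q and N×N real diagonal matrices D₁ and D₂ such that det V₁ ≠ 0, det(Q·D₂ − D₁·Q) ≠ 0, and K·P₀ = P₀·diag(D₁, D₂), where P₀ is the 2N×2N block matrix P₀ = [[V₁, V₁Q], [V₁D₁, V₁QD₂]] (which is then invertible, with det P₀ = (det V₁)²·det(QD₂ − D₁Q)). -/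
open Matrix

private lemma detP0 {N : ℕ} (V₁ Q : Matrix (Fin N) (Fin N) ℝ) (d₁ d₂ : Fin N → ℝ)
    (h : IsUnit V₁.det) :
    (Matrix.fromBlocks V₁ (V₁ * Q) (V₁ * Matrix.diagonal d₁)
        (V₁ * Q * Matrix.diagonal d₂)).det =
      V₁.det * (V₁.det * (Q * Matrix.diagonal d₂ - Matrix.diagonal d₁ * Q).det) := by
  haveI : Invertible V₁ := V₁.invertibleOfIsUnitDet h
  rw [Matrix.det_fromBlocks₁₁]
  have h1 : V₁ * Matrix.diagonal d₁ * ⅟V₁ * (V₁ * Q) = V₁ * (Matrix.diagonal d₁ * Q) := by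
    rw [Matrix.mul_assoc (V₁ * Matrix.diagonal d₁), invOf_mul_cancel_left, Matrix.mul_assoc]
  rw [h1, Matrix.mul_assoc V₁ Q, ← Matrix.mul_sub, Matrix.det_mul]

private lemma exists_perm_isUnit_det {N : ℕ}
    (A : Matrix (Fin N) (Fin N ⊕ Fin N) ℝ)
    (hA : LinearIndependent ℝ (fun i => A i)) :
    ∃ σ : Equiv.Perm (Fin N ⊕ Fin N),
      IsUnit (A.submatrix id (fun j => σ (Sum.inl j))).det := by
  classical
  set c : (Fin N ⊕ Fin N) → (Fin N → ℝ) := fun j => Aᵀ j with hc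
  have hspan : Submodule.span ℝ (Set.range c) = ⊤ := by
    apply Submodule.eq_top_of_finrank_eq
    have h1 : A.rank = Fintype.card (Fin N) := hA.rank_matrix
    have h2 := A.rank_eq_finrank_span_cols
    have h3 : Set.range c = Set.range A.col := rfl
    rw [h3, ← h2, h1, Fintype.card_fin, Module.finrank_fintype_fun_eq_card, Fintype.card_fin]
  obtain ⟨t, hts, hsp, hli⟩ := exists_linearIndependent ℝ (Set.range c)
  have htfin : t.Finite := (Set.finite_range c).subset hts
  haveI := htfin.fintype
  have hb : Submodule.span ℝ t = ⊤ := by rw [hsp, hspan]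
  let b : Module.Basis t ℝ (Fin N → ℝ) := Module.Basis.mk hli (by rw [Subtype.range_coe, hb])
  have hcard : Fintype.card t = N := by
    have := Module.finrank_eq_card_basis b
    rw [Module.finrank_fintype_fun_eq_card, Fintype.card_fin] at this
    omega
  have hpre : ∀ x : t, ∃ j, c j = (x : Fin N → ℝ) := fun x => hts x.2
  choose g hg using hpre
  have hginj : Function.Injective g := fun x y hxy =>
    Subtype.ext (by rw [← hg x, ← hg y, hxy])
  let e : Fin N ≃ t := Fintype.equivOfCardEq (by rw [Fintype.card_fin, hcard])
  let f : Fin N → (Fin N ⊕ Fin N) := fun j => g (e j)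
  have hfinj : Function.Injective f := hginj.comp e.injective
  have hsel : IsUnit (A.submatrix id f).det := by
    rw [← Matrix.isUnit_iff_isUnit_det, ← Matrix.linearIndependent_cols_iff_isUnit]
    have heq : (fun j => (A.submatrix id f)ᵀ j) = fun j => ((e j : Fin N → ℝ)) := by
      funext j
      have : (A.submatrix id f)ᵀ j = c (f j) := rfl
      rw [this, hg (e j)]
    rw [show (A.submatrix id f).col = fun j => (A.submatrix id f)ᵀ j from rfl, heq]
    exact hli.comp e e.injective
  let S : Set (Fin N ⊕ Fin N) := Set.range f
  have hScard : Fintype.card S = N := by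
    rw [Set.card_range_of_injective hfinj, Fintype.card_fin]
  have hcompl : Fintype.card (↥Sᶜ) = N := by
    have h := Fintype.card_compl_set S
    rw [hScard, Fintype.card_sum, Fintype.card_fin] at h
    omega
  let e₁ : Fin N ≃ S := Equiv.ofInjective f hfinj
  let e₂ : Fin N ≃ ↥Sᶜ := Fintype.equivOfCardEq (by rw [Fintype.card_fin, hcompl])
  refine ⟨(Equiv.sumCongr e₁ e₂).trans (Equiv.Set.sumCompl S), ?_⟩
  have hσ : (fun j => ((Equiv.sumCongr e₁ e₂).trans (Equiv.Set.sumCompl S)) (Sum.inl j)) = f := by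
    funext j
    rfl
  rw [hσ]
  exact hsel

/-- the companion matrix `K = [[0, 1], [−C', −B']]` is diagonalizable
over ℝ iff there exist N×N real matrices `V₁`, `Q` and real diagonal matrices
`D₁ = diagonal d₁`, `D₂ = diagonal d₂` with `det V₁ ≠ 0`,
`det (Q·D₂ − D₁·Q) ≠ 0` and `K·P₀ = P₀·diag(D₁, D₂)`, where
`P₀ = [[V₁, V₁Q], [V₁D₁, V₁QD₂]]`. -/
theorem companion_diagonalizable_iff_exists_pencil_eigenbasis
    (N : ℕ) (hN : 1 ≤ N) (B' C' : Matrix (Fin N) (Fin N) ℝ) :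
    (∃ (P : Matrix (Fin N ⊕ Fin N) (Fin N ⊕ Fin N) ℝ) (d : Fin N ⊕ Fin N → ℝ),
        IsUnit P.det ∧
        Matrix.fromBlocks 0 1 (-C') (-B') = P * Matrix.diagonal d * P⁻¹) ↔
      (∃ (V₁ Q : Matrix (Fin N) (Fin N) ℝ) (d₁ d₂ : Fin N → ℝ),
        V₁.det ≠ 0 ∧
        (Q * Matrix.diagonal d₂ - Matrix.diagonal d₁ * Q).det ≠ 0 ∧
        Matrix.fromBlocks 0 1 (-C') (-B') *
            Matrix.fromBlocks V₁ (V₁ * Q) (V₁ * Matrix.diagonal d₁)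
              (V₁ * Q * Matrix.diagonal d₂) =
          Matrix.fromBlocks V₁ (V₁ * Q) (V₁ * Matrix.diagonal d₁)
              (V₁ * Q * Matrix.diagonal d₂) *
            Matrix.fromBlocks (Matrix.diagonal d₁) 0 0 (Matrix.diagonal d₂)) := by
  constructor
  · rintro ⟨P, d, hP, hK⟩
    set K := Matrix.fromBlocks (0 : Matrix (Fin N) (Fin N) ℝ) (1 : Matrix (Fin N) (Fin N) ℝ) (-C') (-B') with hKdef
    have hKP : K * P = P * Matrix.diagonal d := by
      rw [hK, Matrix.mul_assoc (P * Matrix.diagonal d), Matrix.nonsing_inv_mul P hP,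
        Matrix.mul_one]
    have hrows : LinearIndependent ℝ (fun i : Fin N => (P.submatrix Sum.inl id) i) := by
      have h := (Matrix.linearIndependent_rows_iff_isUnit (A := P)).mpr
        ((Matrix.isUnit_iff_isUnit_det P).mpr hP)
      exact h.comp Sum.inl Sum.inl_injective
    obtain ⟨σ, hσdet⟩ := exists_perm_isUnit_det (P.submatrix Sum.inl id) hrows
    set P' : Matrix (Fin N ⊕ Fin N) (Fin N ⊕ Fin N) ℝ := P.submatrix id ⇑σ with hP'def
    set X := P'.toBlocks₁₁ with hXdef
    set Y := P'.toBlocks₁₂ with hYdef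
    set Z := P'.toBlocks₂₁ with hZdef
    set W := P'.toBlocks₂₂ with hWdef
    set d₁ : Fin N → ℝ := fun i => d (σ (Sum.inl i)) with hd₁def
    set d₂ : Fin N → ℝ := fun i => d (σ (Sum.inr i)) with hd₂def
    have hXu : IsUnit X.det := by
      have : X = (P.submatrix Sum.inl id).submatrix id (fun j => σ (Sum.inl j)) := by
        ext i j; rfl
      rw [this]; exact hσdet
    -- the permuted eigen-equation
    have hKP' : K * P' = P' * Matrix.diagonal (d ∘ ⇑σ) := by
      have h1 : K * P' =
          (K * P).submatrix id ⇑σ := by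
        ext i j
        simp [Matrix.mul_apply, hP'def, Matrix.submatrix_apply]
      have h2 : P' * Matrix.diagonal (d ∘ ⇑σ) =
          (P * Matrix.diagonal d).submatrix id ⇑σ := by
        rw [← Matrix.submatrix_diagonal_equiv d σ, hP'def, Matrix.submatrix_mul_equiv]
      rw [h1, h2, hKP]
    have hdσ : Matrix.diagonal (d ∘ ⇑σ) =
        Matrix.fromBlocks (Matrix.diagonal d₁) 0 0 (Matrix.diagonal d₂) := by
      rw [Matrix.fromBlocks_diagonal]
      congr 1
      funext j; cases j <;> rfl
    have hP'B : P' = Matrix.fromBlocks X Y Z W := (Matrix.fromBlocks_toBlocks P').symm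
    have hblocks := hKP'
    rw [hP'B, hdσ, Matrix.fromBlocks_multiply, Matrix.fromBlocks_multiply] at hblocks
    have hZ : Z = X * Matrix.diagonal d₁ := by
      have h11 := congrArg Matrix.toBlocks₁₁ hblocks
      simpa [Matrix.toBlocks_fromBlocks₁₁] using h11
    have hW : W = Y * Matrix.diagonal d₂ := by
      have h12 := congrArg Matrix.toBlocks₁₂ hblocks
      simpa [Matrix.toBlocks_fromBlocks₁₂] using h12
    refine ⟨X, X⁻¹ * Y, d₁, d₂, hXu.ne_zero, ?_, ?_⟩
    · -- nonvanishing of the coupling determinant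
      have hXQ : X * (X⁻¹ * Y) = Y := Matrix.mul_nonsing_inv_cancel_left X Y hXu
      have hP'u : IsUnit P'.det := by
        rw [hP'def, Matrix.det_permute']
        rcases Int.units_eq_one_or (Equiv.Perm.sign σ) with h | h <;>
          · rw [h]
            simpa using hP
      have hdet := detP0 X (X⁻¹ * Y) d₁ d₂ hXu
      rw [hXQ, ← hZ, ← hW, ← hP'B] at hdet
      intro h0
      rw [hdet, h0, mul_zero, mul_zero] at hP'u
      exact (by simpa using hP'u : False)
    · have hXQ : X * (X⁻¹ * Y) = Y := Matrix.mul_nonsing_inv_cancel_left X Y hXu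
      rw [hXQ, ← hZ, ← hW, ← hP'B, ← hdσ]
      exact hKP'
  · rintro ⟨V₁, Q, d₁, d₂, hV, hQ, heq⟩
    have hVu : IsUnit V₁.det := isUnit_iff_ne_zero.mpr hV
    set P₀ := Matrix.fromBlocks V₁ (V₁ * Q) (V₁ * Matrix.diagonal d₁)
      (V₁ * Q * Matrix.diagonal d₂) with hP₀def
    have hdet : P₀.det = V₁.det * (V₁.det *
        (Q * Matrix.diagonal d₂ - Matrix.diagonal d₁ * Q).det) := detP0 V₁ Q d₁ d₂ hVu
    have hP₀u : IsUnit P₀.det := by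
      rw [hdet]
      exact (hVu.mul (hVu.mul (isUnit_iff_ne_zero.mpr hQ)))
    refine ⟨P₀, Sum.elim d₁ d₂, hP₀u, ?_⟩
    have hdiag : Matrix.diagonal (Sum.elim d₁ d₂) =
        Matrix.fromBlocks (Matrix.diagonal d₁) 0 0 (Matrix.diagonal d₂) :=
      (Matrix.fromBlocks_diagonal d₁ d₂).symm
    rw [hdiag, ← heq, Matrix.mul_assoc, Matrix.mul_nonsing_inv P₀ hP₀u, Matrix.mul_one]
end

section
/- Let N ≥ 1, let B' and C' be N×N real matrices, let V₁ be an invertible N×N real matrix, Q an N×N real matrix, and D₁ = diag(λ₁, …, λ_N), D₂ = diag(ρ₁, …, ρ_N) real diagonal matrices with det(D₁Q − QD₂) ≠ 0. Set P₀ = [[V₁, V₁Q], [V₁D₁, V₁QD₂]]. Then K·P₀ = P₀·diag(D₁, D₂) (i.e., the first-order pencil M(λ) is diagonalized by P₀ with eigenvalues λᵢ and ρᵢ) if and only if for every i = 1, …, N one has S(λᵢ)·colᵢ(V₁) = 0 and S(ρᵢ)·colᵢ(V₁Q) = 0. Moreover, in that case det S(λ) = (λ−λ₁)⋯(λ−λ_N)·(λ−ρ₁)⋯(λ−ρ_N)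 for all λ ∈ ℝ. -/
open Matrix

lemma col_eq_aux {N : ℕ} (B C V : Matrix (Fin N) (Fin N) ℝ) (d : Fin N → ℝ) :
    V * Matrix.diagonal d * Matrix.diagonal d + B * (V * Matrix.diagonal d) + C * V = 0 ↔
    ∀ i, ((d i) ^ 2 • (1 : Matrix (Fin N) (Fin N) ℝ) + (d i) • B + C).mulVec
        (fun j => V j i) = 0 := by
  have h : ∀ i j, (V * Matrix.diagonal d * Matrix.diagonal d + B * (V * Matrix.diagonal d)
      + C * V) j i = (((d i) ^ 2 • (1 : Matrix (Fin N) (Fin N) ℝ) + (d i) • B + C).mulVec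
        (fun j => V j i)) j := by
    intro i j
    simp [Matrix.add_apply, Matrix.mul_diagonal, Matrix.mul_apply, Matrix.mulVec,
      dotProduct, Matrix.one_apply, Matrix.diagonal_apply, mul_add, add_mul,
      Finset.sum_add_distrib, Finset.mul_sum, ite_mul, mul_ite, mul_zero, zero_mul,
      Finset.sum_ite_eq, Finset.sum_ite_eq', pow_two]
    congr 1
    · ring
    · exact Finset.sum_congr rfl fun k _ => by ring
  constructor
  · intro hM i
    funext j
    rw [← h i j, hM]
    simp
  · intro h'
    ext j i
    rw [h i j, congrFun (h' i) j]
    simp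

lemma blockEq_iff_aux {N : ℕ} (B' C' V₁ Q : Matrix (Fin N) (Fin N) ℝ) (d₁ d₂ : Fin N → ℝ) :
    (Matrix.fromBlocks 0 1 (-C') (-B') *
          Matrix.fromBlocks V₁ (V₁ * Q) (V₁ * Matrix.diagonal d₁)
            (V₁ * Q * Matrix.diagonal d₂) =
        Matrix.fromBlocks V₁ (V₁ * Q) (V₁ * Matrix.diagonal d₁)
            (V₁ * Q * Matrix.diagonal d₂) *
          Matrix.fromBlocks (Matrix.diagonal d₁) 0 0 (Matrix.diagonal d₂)) ↔
    (V₁ * Matrix.diagonal d₁ * Matrix.diagonal d₁ + B' * (V₁ * Matrix.diagonal d₁)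
        + C' * V₁ = 0 ∧
     V₁ * Q * Matrix.diagonal d₂ * Matrix.diagonal d₂ + B' * (V₁ * Q * Matrix.diagonal d₂)
        + C' * (V₁ * Q) = 0) := by
  rw [Matrix.fromBlocks_multiply, Matrix.fromBlocks_multiply, Matrix.fromBlocks_inj]
  simp only [Matrix.zero_mul, Matrix.one_mul, Matrix.mul_zero, Matrix.mul_one, zero_add,
    add_zero, Matrix.neg_mul, true_and, and_true, eq_self_iff_true]
  constructor
  · rintro ⟨h1, h2⟩
    constructor
    · rw [← h1]; abel
    · rw [← h2]; abel
  · rintro ⟨h1, h2⟩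
    constructor
    · rw [← eq_neg_of_add_eq_zero_left h1]; abel
    · rw [← eq_neg_of_add_eq_zero_left h2]; abel

lemma detJ_aux {N : ℕ} :
    (Matrix.fromBlocks (0 : Matrix (Fin N) (Fin N) ℝ) (1 : Matrix (Fin N) (Fin N) ℝ)
      (-1) 0).det = 1 := by
  have h : Matrix.fromBlocks (0 : Matrix (Fin N) (Fin N) ℝ) (1 : Matrix (Fin N) (Fin N) ℝ)
        (-1) 0 =
      (Matrix.fromBlocks 1 0 (-1) 1 : Matrix (Fin N ⊕ Fin N) (Fin N ⊕ Fin N) ℝ) *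
        (Matrix.fromBlocks 1 1 0 1 : Matrix (Fin N ⊕ Fin N) (Fin N ⊕ Fin N) ℝ) *
        (Matrix.fromBlocks 1 0 (-1) 1 : Matrix (Fin N ⊕ Fin N) (Fin N ⊕ Fin N) ℝ) := by
    simp [Matrix.fromBlocks_multiply]
  rw [h, Matrix.det_mul, Matrix.det_mul, Matrix.det_fromBlocks_zero₁₂,
    Matrix.det_fromBlocks_zero₂₁]
  simp

lemma smul_one_sub_K_aux {N : ℕ} (B' C' : Matrix (Fin N) (Fin N) ℝ) (lam : ℝ) :
    lam • (1 : Matrix (Fin N ⊕ Fin N) (Fin N ⊕ Fin N) ℝ) -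
      Matrix.fromBlocks 0 1 (-C') (-B') =
    Matrix.fromBlocks (lam • 1) (-1) C' (lam • 1 + B') := by
  rw [← Matrix.fromBlocks_one, Matrix.fromBlocks_smul, sub_eq_add_neg,
    Matrix.fromBlocks_neg, Matrix.fromBlocks_add, Matrix.fromBlocks_inj]
  refine ⟨by simp, by simp, by simp, by simp [sub_eq_add_neg]⟩

lemma factor_aux {N : ℕ} (B' C' : Matrix (Fin N) (Fin N) ℝ) (lam : ℝ) :
    Matrix.fromBlocks (lam • 1) (-1) C' (lam • 1 + B') *
      Matrix.fromBlocks (1 : Matrix (Fin N) (Fin N) ℝ) 0 (lam • 1) 1 *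
      Matrix.fromBlocks (0 : Matrix (Fin N) (Fin N) ℝ) 1 (-1) 0 =
    Matrix.fromBlocks 1 0 (-(lam • 1 + B'))
      (lam ^ 2 • (1 : Matrix (Fin N) (Fin N) ℝ) + lam • B' + C') := by
  rw [Matrix.fromBlocks_multiply, Matrix.fromBlocks_multiply, Matrix.fromBlocks_inj]
  refine ⟨by simp, by simp, by simp, ?_⟩
  simp [add_mul, Matrix.mul_smul, Matrix.smul_mul, smul_smul, pow_two]
  abel

lemma det_smul_one_sub_K_aux {N : ℕ} (B' C' : Matrix (Fin N) (Fin N) ℝ) (lam : ℝ) :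
    (lam • (1 : Matrix (Fin N ⊕ Fin N) (Fin N ⊕ Fin N) ℝ) -
      Matrix.fromBlocks 0 1 (-C') (-B')).det =
    (lam ^ 2 • (1 : Matrix (Fin N) (Fin N) ℝ) + lam • B' + C').det := by
  rw [smul_one_sub_K_aux]
  have h1 : (Matrix.fromBlocks (lam • 1 : Matrix (Fin N) (Fin N) ℝ) (-1) C'
        (lam • 1 + B')).det *
        (Matrix.fromBlocks (1 : Matrix (Fin N) (Fin N) ℝ) (0 : Matrix (Fin N) (Fin N) ℝ)
          (lam • 1) 1).det *
        (Matrix.fromBlocks (0 : Matrix (Fin N) (Fin N) ℝ) (1 : Matrix (Fin N) (Fin N) ℝ)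
          (-1) 0).det =
      (Matrix.fromBlocks (1 : Matrix (Fin N) (Fin N) ℝ) 0 (-(lam • 1 + B'))
        (lam ^ 2 • (1 : Matrix (Fin N) (Fin N) ℝ) + lam • B' + C')).det := by
    rw [← Matrix.det_mul, ← Matrix.det_mul, factor_aux]
  rw [Matrix.det_fromBlocks_zero₁₂, detJ_aux, Matrix.det_fromBlocks_zero₁₂] at h1
  simpa using h1

lemma det_smul_one_sub_D_aux {N : ℕ} (d₁ d₂ : Fin N → ℝ) (lam : ℝ) :
    (lam • (1 : Matrix (Fin N ⊕ Fin N) (Fin N ⊕ Fin N) ℝ) -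
      Matrix.fromBlocks (Matrix.diagonal d₁) 0 0 (Matrix.diagonal d₂)).det =
    (∏ i : Fin N, (lam - d₁ i)) * ∏ i : Fin N, (lam - d₂ i) := by
  rw [← Matrix.fromBlocks_one, Matrix.fromBlocks_smul, sub_eq_add_neg,
    Matrix.fromBlocks_neg, Matrix.fromBlocks_add]
  simp only [smul_zero, add_zero, zero_add, neg_zero]
  rw [Matrix.det_fromBlocks_zero₂₁, Matrix.smul_one_eq_diagonal,
    Matrix.diagonal_neg, Matrix.diagonal_add, Matrix.diagonal_neg, Matrix.diagonal_add,
    Matrix.det_diagonal, Matrix.det_diagonal]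
  simp [sub_eq_add_neg]

lemma detP₀_ne_zero_aux {N : ℕ} (V₁ Q : Matrix (Fin N) (Fin N) ℝ) (d₁ d₂ : Fin N → ℝ)
    (hV : V₁.det ≠ 0)
    (hΔ : (Matrix.diagonal d₁ * Q - Q * Matrix.diagonal d₂).det ≠ 0) :
    (Matrix.fromBlocks V₁ (V₁ * Q) (V₁ * Matrix.diagonal d₁)
      (V₁ * Q * Matrix.diagonal d₂)).det ≠ 0 := by
  have hfac : Matrix.fromBlocks V₁ (V₁ * Q) (V₁ * Matrix.diagonal d₁)
        (V₁ * Q * Matrix.diagonal d₂) =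
      Matrix.fromBlocks V₁ 0 0 V₁ *
        (Matrix.fromBlocks 1 0 (Matrix.diagonal d₁) 1 *
          Matrix.fromBlocks 1 Q 0 (Q * Matrix.diagonal d₂ - Matrix.diagonal d₁ * Q)) := by
    rw [Matrix.fromBlocks_multiply, Matrix.fromBlocks_multiply, Matrix.fromBlocks_inj]
    refine ⟨by simp, by simp, by simp, ?_⟩
    simp [Matrix.mul_add, mul_sub, Matrix.mul_assoc]
  rw [hfac, Matrix.det_mul, Matrix.det_mul, Matrix.det_fromBlocks_zero₂₁,
    Matrix.det_fromBlocks_zero₁₂, Matrix.det_fromBlocks_zero₂₁]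
  have h2 : (Q * Matrix.diagonal d₂ - Matrix.diagonal d₁ * Q).det ≠ 0 := by
    rw [show Q * Matrix.diagonal d₂ - Matrix.diagonal d₁ * Q =
      -(Matrix.diagonal d₁ * Q - Q * Matrix.diagonal d₂) from by abel, Matrix.det_neg]
    exact mul_ne_zero (pow_ne_zero _ (by norm_num)) hΔ
  simp only [Matrix.det_one, one_mul, mul_one]
  exact mul_ne_zero (mul_ne_zero hV hV) h2

/-- given invertible `V₁`, a matrix `Q`, and diagonal matrices
`D₁ = diagonal d₁`, `D₂ = diagonal d₂` with `det(D₁Q − QD₂) ≠ 0`, the matrix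
`P₀ = [[V₁, V₁Q], [V₁D₁, V₁QD₂]]` diagonalizes the companion matrix
`K = [[0,1],[−C',−B']]` (i.e. `K·P₀ = P₀·diag(D₁,D₂)`) iff the columns of `V₁`
and of `V₁Q` are eigenvectors of the second-order pencil
`S(λ) = λ²·1 + λ·B' + C'` with eigenvalues `d₁ i` resp. `d₂ i`; and in that case
`det S(λ) = ∏ᵢ (λ − d₁ i) · ∏ᵢ (λ − d₂ i)` for all real `λ`. -/
theorem companion_eigenbasis_iff_secondOrder_eigenpairs
    (N : ℕ) (hN : 1 ≤ N) (B' C' V₁ Q : Matrix (Fin N) (Fin N) ℝ)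
    (d₁ d₂ : Fin N → ℝ) (hV : V₁.det ≠ 0)
    (hΔ : (Matrix.diagonal d₁ * Q - Q * Matrix.diagonal d₂).det ≠ 0) :
    ((Matrix.fromBlocks 0 1 (-C') (-B') *
          Matrix.fromBlocks V₁ (V₁ * Q) (V₁ * Matrix.diagonal d₁)
            (V₁ * Q * Matrix.diagonal d₂) =
        Matrix.fromBlocks V₁ (V₁ * Q) (V₁ * Matrix.diagonal d₁)
            (V₁ * Q * Matrix.diagonal d₂) *
          Matrix.fromBlocks (Matrix.diagonal d₁) 0 0 (Matrix.diagonal d₂)) ↔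
      (∀ i : Fin N,
        ((d₁ i) ^ 2 • (1 : Matrix (Fin N) (Fin N) ℝ) + (d₁ i) • B' + C').mulVec
            (fun j => V₁ j i) = 0 ∧
        ((d₂ i) ^ 2 • (1 : Matrix (Fin N) (Fin N) ℝ) + (d₂ i) • B' + C').mulVec
            (fun j => (V₁ * Q) j i) = 0)) ∧
    ((Matrix.fromBlocks 0 1 (-C') (-B') *
          Matrix.fromBlocks V₁ (V₁ * Q) (V₁ * Matrix.diagonal d₁)
            (V₁ * Q * Matrix.diagonal d₂) =
        Matrix.fromBlocks V₁ (V₁ * Q) (V₁ * Matrix.diagonal d₁)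
            (V₁ * Q * Matrix.diagonal d₂) *
          Matrix.fromBlocks (Matrix.diagonal d₁) 0 0 (Matrix.diagonal d₂)) →
      ∀ lam : ℝ,
        (lam ^ 2 • (1 : Matrix (Fin N) (Fin N) ℝ) + lam • B' + C').det =
          (∏ i : Fin N, (lam - d₁ i)) * ∏ i : Fin N, (lam - d₂ i)) := by
  constructor
  · rw [blockEq_iff_aux, col_eq_aux, col_eq_aux, forall_and]
  · intro hEq lam
    have hsub : (lam • (1 : Matrix (Fin N ⊕ Fin N) (Fin N ⊕ Fin N) ℝ) -
          Matrix.fromBlocks 0 1 (-C') (-B')) *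
        Matrix.fromBlocks V₁ (V₁ * Q) (V₁ * Matrix.diagonal d₁)
          (V₁ * Q * Matrix.diagonal d₂) =
        Matrix.fromBlocks V₁ (V₁ * Q) (V₁ * Matrix.diagonal d₁)
          (V₁ * Q * Matrix.diagonal d₂) *
        (lam • (1 : Matrix (Fin N ⊕ Fin N) (Fin N ⊕ Fin N) ℝ) -
          Matrix.fromBlocks (Matrix.diagonal d₁) 0 0 (Matrix.diagonal d₂)) := by
      rw [Matrix.sub_mul, Matrix.mul_sub, hEq, Matrix.smul_mul, Matrix.mul_smul,
        Matrix.one_mul, Matrix.mul_one]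
    have hdet := congrArg Matrix.det hsub
    rw [Matrix.det_mul, Matrix.det_mul, mul_comm
      (Matrix.fromBlocks V₁ (V₁ * Q) (V₁ * Matrix.diagonal d₁)
        (V₁ * Q * Matrix.diagonal d₂)).det] at hdet
    have hP := detP₀_ne_zero_aux V₁ Q d₁ d₂ hV hΔ
    have := mul_right_cancel₀ hP hdet
    rw [det_smul_one_sub_K_aux, det_smul_one_sub_D_aux] at this
    exact this
end

section
/- Let N ≥ 1 and let B' and C' be N×N real matrices with companion matrix K = [[0, 1], [−C', −B']]. Then K is diagonalizable over ℝ if and only if there exist an invertible N×N real matrix V₁, an N×N real matrix Q, and real diagonal matrices D₁, D₂ with det(D₁Q − QD₂) ≠ 0 such that, setting A₁ = V₁·D₁·V₁⁻¹ and A₂ = (V₁(D₁Q − QD₂))·D₂·(V₁(D₁Q − QD₂))⁻¹, one has C' = A₂·A₁ and B' = −(A₁ + A₂); equivalently, the second-order pencil factorizes as S(λ) = (λ·1 − A₂)·(λ·1 − A₁) for all λ ∈ ℝ, a product of two first-order pencils each similar to a real diagonal pencil. -/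
open Matrix

lemma exists_cols_unit {N : ℕ} {ι : Type*} [Fintype ι] [DecidableEq ι]
    (T : Matrix (Fin N) ι ℝ) (h : Function.Surjective T.mulVecLin) :
    ∃ g : Fin N → ι, Function.Injective g ∧ IsUnit (T.submatrix id g) := by
  classical
  have hspan : Submodule.span ℝ (Set.range Tᵀ) = ⊤ := by
    rw [show Set.range Tᵀ = Set.range T.col from rfl, ← Matrix.range_mulVecLin]
    exact LinearMap.range_eq_top.mpr h
  obtain ⟨b, hbsub, hbspan, hbind⟩ := exists_linearIndependent ℝ (Set.range Tᵀ)
  rw [hspan] at hbspan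
  have hbfin : b.Finite := Set.Finite.subset (Set.finite_range Tᵀ) hbsub
  haveI := hbfin.fintype
  let bas : Module.Basis b ℝ (Fin N → ℝ) := Module.Basis.mk hbind
    (by rw [Subtype.range_coe_subtype, Set.setOf_mem_eq, hbspan])
  have hcard : Fintype.card b = N := by
    have := Module.finrank_eq_card_basis bas
    simpa [Module.finrank_pi] using this.symm
  let e : Fin N ≃ b := (Fintype.equivFinOfCardEq hcard).symm
  have hchoice : ∀ x : b, ∃ j : ι, Tᵀ j = (x : Fin N → ℝ) := fun x => hbsub x.2
  choose g₀ hg₀ using hchoice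
  refine ⟨fun j => g₀ (e j), ?_, ?_⟩
  · intro x y hxy
    apply e.injective
    apply Subtype.ext
    simp only at hxy
    rw [← hg₀ (e x), ← hg₀ (e y), hxy]
  · rw [← Matrix.linearIndependent_cols_iff_isUnit]
    have : (fun j => (T.submatrix id fun j => g₀ (e j))ᵀ j) =
        (fun x : b => (x : Fin N → ℝ)) ∘ e := by
      funext j
      ext i
      have := congrFun (hg₀ (e j)) i
      simpa [transpose, submatrix] using this
    rw [show (T.submatrix id fun j => g₀ (e j)).col = _ from this]
    exact hbind.comp e e.injective

lemma pencil_core {n : Type*} [Fintype n] [DecidableEq n]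
    (B' C' V₁ V₂ U Δ₁ Δ₂ W X : Matrix n n ℝ)
    (hv : V₁ * U = 1) (hv' : U * V₁ = 1)
    (hW : W = V₁ * Δ₁ * U * V₂ - V₂ * Δ₂)
    (hw : W * X = 1)
    (h21 : -(C' * V₁) + -(B' * (V₁ * Δ₁)) = V₁ * Δ₁ * Δ₁)
    (h22 : -(C' * V₂) + -(B' * (V₂ * Δ₂)) = V₂ * Δ₂ * Δ₂) :
    C' = W * Δ₂ * X * (V₁ * Δ₁ * U) ∧ B' = -(V₁ * Δ₁ * U + W * Δ₂ * X) := by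
  have h1 : C' * V₁ = -(B' * (V₁ * Δ₁)) - V₁ * Δ₁ * Δ₁ := by rw [← h21]; abel
  have h2 : C' * V₂ = -(B' * (V₂ * Δ₂)) - V₂ * Δ₂ * Δ₂ := by rw [← h22]; abel
  have hA1A1 : (V₁ * Δ₁ * U) * (V₁ * Δ₁ * U) = V₁ * Δ₁ * Δ₁ * U := by
    calc (V₁ * Δ₁ * U) * (V₁ * Δ₁ * U) = V₁ * Δ₁ * ((U * V₁) * (Δ₁ * U)) := by noncomm_ring
      _ = V₁ * Δ₁ * Δ₁ * U := by rw [hv']; noncomm_ring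
  have hC : C' = (-B' - V₁ * Δ₁ * U) * (V₁ * Δ₁ * U) := by
    calc C' = C' * (V₁ * U) := by rw [hv, Matrix.mul_one]
      _ = C' * V₁ * U := by noncomm_ring
      _ = (-(B' * (V₁ * Δ₁)) - V₁ * Δ₁ * Δ₁) * U := by rw [h1]
      _ = -(B' * (V₁ * Δ₁ * U)) - V₁ * Δ₁ * Δ₁ * U := by noncomm_ring
      _ = -(B' * (V₁ * Δ₁ * U)) - (V₁ * Δ₁ * U) * (V₁ * Δ₁ * U) := by rw [hA1A1]
      _ = (-B' - V₁ * Δ₁ * U) * (V₁ * Δ₁ * U) := by noncomm_ring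
  have hA2W : (-B' - V₁ * Δ₁ * U) * W = W * Δ₂ := by
    calc (-B' - V₁ * Δ₁ * U) * W
        = ((-B' - V₁ * Δ₁ * U) * (V₁ * Δ₁ * U)) * V₂ + B' * (V₂ * Δ₂)
            + (V₁ * Δ₁ * U) * (V₂ * Δ₂) := by rw [hW]; noncomm_ring
      _ = C' * V₂ + B' * (V₂ * Δ₂) + (V₁ * Δ₁ * U) * (V₂ * Δ₂) := by rw [← hC]
      _ = (-(B' * (V₂ * Δ₂)) - V₂ * Δ₂ * Δ₂) + B' * (V₂ * Δ₂)
            + (V₁ * Δ₁ * U) * (V₂ * Δ₂) := by rw [h2]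
      _ = (V₁ * Δ₁ * U * V₂ - V₂ * Δ₂) * Δ₂ := by noncomm_ring
      _ = W * Δ₂ := by rw [hW]
  have hA2 : -B' - V₁ * Δ₁ * U = W * Δ₂ * X := by
    calc -B' - V₁ * Δ₁ * U = (-B' - V₁ * Δ₁ * U) * (W * X) := by rw [hw, Matrix.mul_one]
      _ = ((-B' - V₁ * Δ₁ * U) * W) * X := by noncomm_ring
      _ = (W * Δ₂) * X := by rw [hA2W]
  constructor
  · rw [hC, hA2]
  · rw [← hA2]; abel

lemma pencil_core_rev {n : Type*} [Fintype n] [DecidableEq n]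
    (V₁ Q U Δ₁ Δ₂ W X : Matrix n n ℝ)
    (hv : V₁ * U = 1) (hv' : U * V₁ = 1)
    (hW : W = V₁ * (Δ₁ * Q - Q * Δ₂))
    (hw : W * X = 1) (hw' : X * W = 1) :
    (-(W * Δ₂ * X * (V₁ * Δ₁ * U)) * V₁ + -(-(V₁ * Δ₁ * U + W * Δ₂ * X)) * (V₁ * Δ₁)
        = V₁ * Δ₁ * Δ₁ + V₁ * Q * Δ₂ * 0)
    ∧ (-(W * Δ₂ * X * (V₁ * Δ₁ * U)) * (V₁ * Q)
          + -(-(V₁ * Δ₁ * U + W * Δ₂ * X)) * (V₁ * Q * Δ₂)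
        = V₁ * Δ₁ * 0 + V₁ * Q * Δ₂ * Δ₂) := by
  have hA1V1 : (V₁ * Δ₁ * U) * V₁ = V₁ * Δ₁ := by
    calc (V₁ * Δ₁ * U) * V₁ = V₁ * Δ₁ * (U * V₁) := by noncomm_ring
      _ = V₁ * Δ₁ := by rw [hv', Matrix.mul_one]
  have hA1V2 : (V₁ * Δ₁ * U) * (V₁ * Q) = V₁ * (Δ₁ * Q) := by
    calc (V₁ * Δ₁ * U) * (V₁ * Q) = V₁ * Δ₁ * (U * V₁) * Q := by noncomm_ring
      _ = V₁ * (Δ₁ * Q) := by rw [hv']; noncomm_ring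
  have hW2 : (V₁ * Δ₁ * U) * (V₁ * Q) - (V₁ * Q) * Δ₂ = W := by
    rw [hA1V2, hW]; noncomm_ring
  have hA2W : (W * Δ₂ * X) * W = W * Δ₂ := by
    calc (W * Δ₂ * X) * W = W * Δ₂ * (X * W) := by noncomm_ring
      _ = W * Δ₂ := by rw [hw', Matrix.mul_one]
  constructor
  · calc -(W * Δ₂ * X * (V₁ * Δ₁ * U)) * V₁ + -(-(V₁ * Δ₁ * U + W * Δ₂ * X)) * (V₁ * Δ₁)
        = -((W * Δ₂ * X) * ((V₁ * Δ₁ * U) * V₁)) + ((V₁ * Δ₁ * U) * V₁) * Δ₁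
            + (W * Δ₂ * X) * (V₁ * Δ₁) := by noncomm_ring
      _ = -((W * Δ₂ * X) * (V₁ * Δ₁)) + (V₁ * Δ₁) * Δ₁
            + (W * Δ₂ * X) * (V₁ * Δ₁) := by rw [hA1V1]
      _ = V₁ * Δ₁ * Δ₁ + V₁ * Q * Δ₂ * 0 := by noncomm_ring
  · calc -(W * Δ₂ * X * (V₁ * Δ₁ * U)) * (V₁ * Q)
          + -(-(V₁ * Δ₁ * U + W * Δ₂ * X)) * (V₁ * Q * Δ₂)
        = -((W * Δ₂ * X) * ((V₁ * Δ₁ * U) * (V₁ * Q) - (V₁ * Q) * Δ₂))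
            + ((V₁ * Δ₁ * U) * (V₁ * Q) - (V₁ * Q) * Δ₂) * Δ₂
            + (V₁ * Q * Δ₂) * Δ₂ := by noncomm_ring
      _ = -((W * Δ₂ * X) * W) + W * Δ₂ + (V₁ * Q * Δ₂) * Δ₂ := by rw [hW2]
      _ = -(W * Δ₂) + W * Δ₂ + (V₁ * Q * Δ₂) * Δ₂ := by rw [hA2W]
      _ = V₁ * Δ₁ * 0 + V₁ * Q * Δ₂ * Δ₂ := by noncomm_ring

/-- the companion matrix `K = [[0, 1], [−C', −B']]` is diagonalizable
over ℝ iff the second-order pencil `S(λ) = λ²·1 + λ·B' + C'` factorizes as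
`S(λ) = (λ·1 − A₂)(λ·1 − A₁)`, i.e. `C' = A₂·A₁` and `B' = −(A₁ + A₂)`, with
`A₁ = V₁·D₁·V₁⁻¹` and `A₂ = (V₁·(D₁Q − QD₂))·D₂·(V₁·(D₁Q − QD₂))⁻¹` for some
invertible `V₁`, some `Q`, and real diagonal `D₁, D₂` with `det(D₁Q − QD₂) ≠ 0`. -/
theorem companion_diagonalizable_iff_pencil_factorizes
    (N : ℕ) (hN : 1 ≤ N) (B' C' : Matrix (Fin N) (Fin N) ℝ) :
    (∃ (P : Matrix (Fin N ⊕ Fin N) (Fin N ⊕ Fin N) ℝ) (d : Fin N ⊕ Fin N → ℝ),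
        IsUnit P.det ∧
        Matrix.fromBlocks 0 1 (-C') (-B') = P * Matrix.diagonal d * P⁻¹) ↔
      (∃ (V₁ Q : Matrix (Fin N) (Fin N) ℝ) (d₁ d₂ : Fin N → ℝ),
        V₁.det ≠ 0 ∧
        (Matrix.diagonal d₁ * Q - Q * Matrix.diagonal d₂).det ≠ 0 ∧
        C' =
          ((V₁ * (Matrix.diagonal d₁ * Q - Q * Matrix.diagonal d₂)) * Matrix.diagonal d₂ *
              (V₁ * (Matrix.diagonal d₁ * Q - Q * Matrix.diagonal d₂))⁻¹) *
            (V₁ * Matrix.diagonal d₁ * V₁⁻¹) ∧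
        B' =
          -((V₁ * Matrix.diagonal d₁ * V₁⁻¹) +
            (V₁ * (Matrix.diagonal d₁ * Q - Q * Matrix.diagonal d₂)) * Matrix.diagonal d₂ *
              (V₁ * (Matrix.diagonal d₁ * Q - Q * Matrix.diagonal d₂))⁻¹)) := by
  classical
  constructor
  · -- forward direction
    rintro ⟨P, d, hP, hK⟩
    have hKP : Matrix.fromBlocks 0 1 (-C') (-B') * P = P * Matrix.diagonal d := by
      rw [hK, Matrix.nonsing_inv_mul_cancel_right _ _ hP]
    set T : Matrix (Fin N) (Fin N ⊕ Fin N) ℝ := P.submatrix Sum.inl id with hT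
    have hsurj : Function.Surjective T.mulVecLin := by
      intro y
      refine ⟨P⁻¹ *ᵥ Sum.elim y 0, ?_⟩
      have h1 : P *ᵥ (P⁻¹ *ᵥ Sum.elim y 0) = Sum.elim y 0 := by
        rw [Matrix.mulVec_mulVec, Matrix.mul_nonsing_inv _ hP, Matrix.one_mulVec]
      funext i
      have := congrFun h1 (Sum.inl i)
      simpa [Matrix.mulVecLin_apply, Matrix.mulVec, dotProduct, hT] using this
    obtain ⟨g, hg, hgunit⟩ := exists_cols_unit T hsurj
    have hcardc : Fintype.card (Fin N) = Fintype.card ((Set.range g)ᶜ : Set (Fin N ⊕ Fin N)) := by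
      rw [Fintype.card_compl_set, Set.card_range_of_injective hg]
      simp
    let ec : Fin N ≃ ((Set.range g)ᶜ : Set (Fin N ⊕ Fin N)) := Fintype.equivOfCardEq hcardc
    let e : (Fin N ⊕ Fin N) ≃ (Fin N ⊕ Fin N) :=
      (Equiv.sumCongr (Equiv.ofInjective g hg) ec).trans (Equiv.Set.sumCompl (Set.range g))
    have he : ∀ j, e (Sum.inl j) = g j := fun j => by
      simp [e, Equiv.Set.sumCompl_apply_inl]
    set P' : Matrix (Fin N ⊕ Fin N) (Fin N ⊕ Fin N) ℝ := P.submatrix id e with hP'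
    set d' : Fin N ⊕ Fin N → ℝ := d ∘ e with hd'
    have hKP' : Matrix.fromBlocks 0 1 (-C') (-B') * P' = P' * Matrix.diagonal d' := by
      ext i j
      have h0 : (Matrix.fromBlocks 0 1 (-C') (-B') * P) i (e j)
          = (P * Matrix.diagonal d) i (e j) := by rw [hKP]
      rw [Matrix.mul_diagonal] at h0
      rw [Matrix.mul_diagonal]
      simpa [Matrix.mul_apply, hP', hd'] using h0
    have hP'unit : IsUnit P'.det := by
      rw [hP', Matrix.det_permute' e P]
      rcases Int.units_eq_one_or (Equiv.Perm.sign e) with h | h <;>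
        simp [h, isUnit_iff_ne_zero.mp hP]
    -- blocks
    set V₁ := P'.toBlocks₁₁ with hV₁def
    set V₂ := P'.toBlocks₁₂ with hV₂def
    set W₁ := P'.toBlocks₂₁ with hW₁def
    set W₂ := P'.toBlocks₂₂ with hW₂def
    set δ₁ : Fin N → ℝ := d' ∘ Sum.inl with hδ₁
    set δ₂ : Fin N → ℝ := d' ∘ Sum.inr with hδ₂
    have hPblocks : P' = Matrix.fromBlocks V₁ V₂ W₁ W₂ := (Matrix.fromBlocks_toBlocks P').symm
    have hdiag : Matrix.diagonal d' =
        Matrix.fromBlocks (Matrix.diagonal δ₁) 0 0 (Matrix.diagonal δ₂) := by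
      rw [Matrix.fromBlocks_diagonal]
      congr 1
      funext x
      cases x <;> rfl
    rw [hPblocks, hdiag, Matrix.fromBlocks_multiply, Matrix.fromBlocks_multiply] at hKP'
    obtain ⟨h11, h12, h21, h22⟩ := Matrix.fromBlocks_inj.mp hKP'
    simp only [Matrix.zero_mul, Matrix.one_mul, Matrix.mul_zero, zero_add, add_zero,
      Matrix.neg_mul] at h11 h12 h21 h22
    rw [h11] at h21
    rw [h12] at h22
    have hV₁T : V₁ = T.submatrix id g := by
      ext i j
      simp [hV₁def, Matrix.toBlocks₁₁, hP', hT, he j]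
    have hV₁u : IsUnit V₁.det := by
      rw [hV₁T, ← Matrix.isUnit_iff_isUnit_det]
      exact hgunit
    have hv : V₁ * V₁⁻¹ = 1 := Matrix.mul_nonsing_inv _ hV₁u
    have hv' : V₁⁻¹ * V₁ = 1 := Matrix.nonsing_inv_mul _ hV₁u
    have hWeq : V₁ * (Matrix.diagonal δ₁ * (V₁⁻¹ * V₂) - (V₁⁻¹ * V₂) * Matrix.diagonal δ₂)
        = V₁ * Matrix.diagonal δ₁ * V₁⁻¹ * V₂ - V₂ * Matrix.diagonal δ₂ := by
      calc V₁ * (Matrix.diagonal δ₁ * (V₁⁻¹ * V₂) - (V₁⁻¹ * V₂) * Matrix.diagonal δ₂)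
          = V₁ * Matrix.diagonal δ₁ * V₁⁻¹ * V₂
            - (V₁ * V₁⁻¹) * (V₂ * Matrix.diagonal δ₂) := by noncomm_ring
        _ = V₁ * Matrix.diagonal δ₁ * V₁⁻¹ * V₂ - V₂ * Matrix.diagonal δ₂ := by
            rw [hv, Matrix.one_mul]
    haveI : Invertible V₁ := V₁.invertibleOfIsUnitDet hV₁u
    have hdetP' : P'.det = V₁.det * (W₂ - W₁ * V₁⁻¹ * V₂).det := by
      rw [hPblocks, Matrix.det_fromBlocks₁₁, Matrix.invOf_eq_nonsing_inv]
    have hschur : W₂ - W₁ * V₁⁻¹ * V₂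
        = -(V₁ * (Matrix.diagonal δ₁ * (V₁⁻¹ * V₂) - (V₁⁻¹ * V₂) * Matrix.diagonal δ₂)) := by
      rw [h11, h12, hWeq]
      noncomm_ring
    have hPdet_ne : P'.det ≠ 0 := isUnit_iff_ne_zero.mp hP'unit
    have hSmdet : (Matrix.diagonal δ₁ * (V₁⁻¹ * V₂) - (V₁⁻¹ * V₂) * Matrix.diagonal δ₂).det ≠ 0 := by
      intro h0
      apply hPdet_ne
      rw [hdetP', hschur, Matrix.det_neg, Matrix.det_mul, h0]
      ring
    have hV₁ne : V₁.det ≠ 0 := isUnit_iff_ne_zero.mp hV₁u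
    have hWu : IsUnit (V₁ * (Matrix.diagonal δ₁ * (V₁⁻¹ * V₂)
        - (V₁⁻¹ * V₂) * Matrix.diagonal δ₂)).det := by
      rw [Matrix.det_mul]
      exact isUnit_iff_ne_zero.mpr (mul_ne_zero hV₁ne hSmdet)
    have hw : (V₁ * (Matrix.diagonal δ₁ * (V₁⁻¹ * V₂) - (V₁⁻¹ * V₂) * Matrix.diagonal δ₂)) *
        (V₁ * (Matrix.diagonal δ₁ * (V₁⁻¹ * V₂) - (V₁⁻¹ * V₂) * Matrix.diagonal δ₂))⁻¹ = 1 :=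
      Matrix.mul_nonsing_inv _ hWu
    obtain ⟨hCres, hBres⟩ := pencil_core B' C' V₁ V₂ V₁⁻¹ (Matrix.diagonal δ₁)
      (Matrix.diagonal δ₂)
      (V₁ * (Matrix.diagonal δ₁ * (V₁⁻¹ * V₂) - (V₁⁻¹ * V₂) * Matrix.diagonal δ₂))
      (V₁ * (Matrix.diagonal δ₁ * (V₁⁻¹ * V₂) - (V₁⁻¹ * V₂) * Matrix.diagonal δ₂))⁻¹
      hv hv' hWeq hw h21 h22
    exact ⟨V₁, V₁⁻¹ * V₂, δ₁, δ₂, hV₁ne, hSmdet, hCres, hBres⟩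
  · -- backward direction
    rintro ⟨V₁, Q, d₁, d₂, hV₁, hSdet, hC, hB⟩
    have hV₁u : IsUnit V₁.det := isUnit_iff_ne_zero.mpr hV₁
    have hv : V₁ * V₁⁻¹ = 1 := Matrix.mul_nonsing_inv _ hV₁u
    have hv' : V₁⁻¹ * V₁ = 1 := Matrix.nonsing_inv_mul _ hV₁u
    have hWu : IsUnit (V₁ * (Matrix.diagonal d₁ * Q - Q * Matrix.diagonal d₂)).det := by
      rw [Matrix.det_mul]
      exact isUnit_iff_ne_zero.mpr (mul_ne_zero hV₁ hSdet)
    have hw : (V₁ * (Matrix.diagonal d₁ * Q - Q * Matrix.diagonal d₂)) *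
        (V₁ * (Matrix.diagonal d₁ * Q - Q * Matrix.diagonal d₂))⁻¹ = 1 :=
      Matrix.mul_nonsing_inv _ hWu
    have hw' : (V₁ * (Matrix.diagonal d₁ * Q - Q * Matrix.diagonal d₂))⁻¹ *
        (V₁ * (Matrix.diagonal d₁ * Q - Q * Matrix.diagonal d₂)) = 1 :=
      Matrix.nonsing_inv_mul _ hWu
    obtain ⟨hBL, hBR⟩ := pencil_core_rev V₁ Q V₁⁻¹ (Matrix.diagonal d₁) (Matrix.diagonal d₂)
      (V₁ * (Matrix.diagonal d₁ * Q - Q * Matrix.diagonal d₂))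
      (V₁ * (Matrix.diagonal d₁ * Q - Q * Matrix.diagonal d₂))⁻¹
      hv hv' rfl hw hw'
    refine ⟨Matrix.fromBlocks V₁ (V₁ * Q) (V₁ * Matrix.diagonal d₁) (V₁ * Q * Matrix.diagonal d₂),
      Sum.elim d₁ d₂, ?_, ?_⟩
    · haveI : Invertible V₁ := V₁.invertibleOfIsUnitDet hV₁u
      rw [Matrix.det_fromBlocks₁₁, Matrix.invOf_eq_nonsing_inv]
      have hin : V₁ * Q * Matrix.diagonal d₂ - V₁ * Matrix.diagonal d₁ * V₁⁻¹ * (V₁ * Q)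
          = -(V₁ * (Matrix.diagonal d₁ * Q - Q * Matrix.diagonal d₂)) := by
        have h5 : V₁ * Matrix.diagonal d₁ * V₁⁻¹ * (V₁ * Q)
            = V₁ * (Matrix.diagonal d₁ * Q) := by
          calc V₁ * Matrix.diagonal d₁ * V₁⁻¹ * (V₁ * Q)
              = V₁ * Matrix.diagonal d₁ * (V₁⁻¹ * V₁) * Q := by noncomm_ring
            _ = V₁ * (Matrix.diagonal d₁ * Q) := by rw [hv']; noncomm_ring
        rw [h5]
        noncomm_ring
      rw [hin, Matrix.det_neg, Matrix.det_mul]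
      apply isUnit_iff_ne_zero.mpr
      apply mul_ne_zero hV₁
      apply mul_ne_zero
      · positivity
      · exact mul_ne_zero hV₁ hSdet
    · have hPu : IsUnit (Matrix.fromBlocks V₁ (V₁ * Q) (V₁ * Matrix.diagonal d₁)
          (V₁ * Q * Matrix.diagonal d₂)).det := by
        haveI : Invertible V₁ := V₁.invertibleOfIsUnitDet hV₁u
        rw [Matrix.det_fromBlocks₁₁, Matrix.invOf_eq_nonsing_inv]
        have h5 : V₁ * Matrix.diagonal d₁ * V₁⁻¹ * (V₁ * Q)
            = V₁ * (Matrix.diagonal d₁ * Q) := by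
          calc V₁ * Matrix.diagonal d₁ * V₁⁻¹ * (V₁ * Q)
              = V₁ * Matrix.diagonal d₁ * (V₁⁻¹ * V₁) * Q := by noncomm_ring
            _ = V₁ * (Matrix.diagonal d₁ * Q) := by rw [hv']; noncomm_ring
        have hin : V₁ * Q * Matrix.diagonal d₂ - V₁ * Matrix.diagonal d₁ * V₁⁻¹ * (V₁ * Q)
            = -(V₁ * (Matrix.diagonal d₁ * Q - Q * Matrix.diagonal d₂)) := by
          rw [h5]; noncomm_ring
        rw [hin, Matrix.det_neg, Matrix.det_mul]
        apply isUnit_iff_ne_zero.mpr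
        apply mul_ne_zero hV₁
        apply mul_ne_zero
        · positivity
        · exact mul_ne_zero hV₁ hSdet
      have hmul : Matrix.fromBlocks 0 1 (-C') (-B') *
          Matrix.fromBlocks V₁ (V₁ * Q) (V₁ * Matrix.diagonal d₁) (V₁ * Q * Matrix.diagonal d₂)
          = Matrix.fromBlocks V₁ (V₁ * Q) (V₁ * Matrix.diagonal d₁)
            (V₁ * Q * Matrix.diagonal d₂) * Matrix.diagonal (Sum.elim d₁ d₂) := by
        rw [← Matrix.fromBlocks_diagonal, Matrix.fromBlocks_multiply, Matrix.fromBlocks_multiply]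
        refine Matrix.fromBlocks_inj.mpr ⟨?_, ?_, ?_, ?_⟩
        · noncomm_ring
        · noncomm_ring
        · rw [hC, hB]
          simpa using hBL
        · rw [hC, hB]
          simpa using hBR
      rw [← hmul, Matrix.mul_nonsing_inv_cancel_right _ _ hPu]
end

section
/- Let N ≥ 1, let V₁ be an invertible N×N real matrix, Q an N×N real matrix, and D₁ = diag(λ₁, …, λ_N), D₂ = diag(ρ₁, …, ρ_N) real diagonal matrices such that Δ := D₁Q − QD₂ is invertible. Define S(λ) := V₁·Δ·(λ·1 − D₂)·Δ⁻¹·(λ·1 − D₁)·V₁⁻¹. Then for every i = 1, …, N one has S(λᵢ)·colᵢ(V₁) = 0 and S(ρᵢ)·colᵢ(V₁Q) = 0; that is, (λᵢ, colᵢ(V₁)) and (ρᵢ, colᵢ(V₁Q)) are eigenpairs of the second-order pencil S(λ). -/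
open Matrix

/-- if `Δ = D₁Q − QD₂` is invertible and
`S(λ) = V₁·Δ·(λ·1 − D₂)·Δ⁻¹·(λ·1 − D₁)·V₁⁻¹`, then `(d₁ i, colᵢ(V₁))` and
`(d₂ i, colᵢ(V₁Q))` are eigenpairs of the second-order pencil `S`. -/
theorem factorized_pencil_eigenpairs
    (N : ℕ) (hN : 1 ≤ N) (V₁ Q : Matrix (Fin N) (Fin N) ℝ) (d₁ d₂ : Fin N → ℝ)
    (hV : IsUnit V₁.det)
    (hΔ : IsUnit (Matrix.diagonal d₁ * Q - Q * Matrix.diagonal d₂).det) :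
    ∀ i : Fin N,
      (V₁ * (Matrix.diagonal d₁ * Q - Q * Matrix.diagonal d₂) *
          ((d₁ i) • (1 : Matrix (Fin N) (Fin N) ℝ) - Matrix.diagonal d₂) *
          (Matrix.diagonal d₁ * Q - Q * Matrix.diagonal d₂)⁻¹ *
          ((d₁ i) • (1 : Matrix (Fin N) (Fin N) ℝ) - Matrix.diagonal d₁) *
          V₁⁻¹).mulVec (fun j => V₁ j i) = 0 ∧
      (V₁ * (Matrix.diagonal d₁ * Q - Q * Matrix.diagonal d₂) *
          ((d₂ i) • (1 : Matrix (Fin N) (Fin N) ℝ) - Matrix.diagonal d₂) *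
          (Matrix.diagonal d₁ * Q - Q * Matrix.diagonal d₂)⁻¹ *
          ((d₂ i) • (1 : Matrix (Fin N) (Fin N) ℝ) - Matrix.diagonal d₁) *
          V₁⁻¹).mulVec (fun j => (V₁ * Q) j i) = 0 := by
  intro i
  set Δ : Matrix (Fin N) (Fin N) ℝ := Matrix.diagonal d₁ * Q - Q * Matrix.diagonal d₂ with hΔdef
  have hΔinv : Δ⁻¹ * Δ = 1 := Matrix.nonsing_inv_mul _ hΔ
  have hVinv : V₁⁻¹ * V₁ = 1 := Matrix.nonsing_inv_mul _ hV
  have e : Fin N → ℝ := Pi.single i 1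
  -- col i of a matrix M equals M *ᵥ (Pi.single i 1)
  have hcol : ∀ M : Matrix (Fin N) (Fin N) ℝ, (fun j => M j i) = M.mulVec (Pi.single i 1) := by
    intro M; funext j; simp [Matrix.mulVec_single]
  constructor
  · rw [hcol V₁]
    rw [Matrix.mulVec_mulVec]
    rw [Matrix.mul_assoc _ V₁⁻¹ V₁, hVinv, Matrix.mul_one]
    rw [← Matrix.mulVec_mulVec]
    have h1 : ((d₁ i) • (1 : Matrix (Fin N) (Fin N) ℝ) - Matrix.diagonal d₁).mulVec
        (Pi.single i 1) = 0 := by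
      rw [Matrix.sub_mulVec]
      rw [Matrix.smul_mulVec, Matrix.one_mulVec, Matrix.diagonal_mulVec_single]
      funext j
      rcases eq_or_ne j i with rfl | h
      · simp
      · simp [Pi.single_eq_of_ne h]
    rw [h1, Matrix.mulVec_zero]
  · rw [hcol (V₁ * Q)]
    rw [Matrix.mulVec_mulVec]
    have hmm : V₁ * Δ * ((d₂ i) • (1 : Matrix (Fin N) (Fin N) ℝ) - Matrix.diagonal d₂) *
        Δ⁻¹ * ((d₂ i) • (1 : Matrix (Fin N) (Fin N) ℝ) - Matrix.diagonal d₁) * V₁⁻¹ * (V₁ * Q)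
        = V₁ * Δ * (((d₂ i) • (1 : Matrix (Fin N) (Fin N) ℝ) - Matrix.diagonal d₂) *
          (Δ⁻¹ * (((d₂ i) • (1 : Matrix (Fin N) (Fin N) ℝ) - Matrix.diagonal d₁) * Q))) := by
      rw [← Matrix.mul_assoc _ V₁ Q, Matrix.mul_assoc _ V₁⁻¹ V₁, hVinv, Matrix.mul_one]
      noncomm_ring
    rw [hmm]
    rw [← Matrix.mulVec_mulVec, ← Matrix.mulVec_mulVec, ← Matrix.mulVec_mulVec, ← Matrix.mulVec_mulVec]
    have h2 : (((d₂ i) • (1 : Matrix (Fin N) (Fin N) ℝ) - Matrix.diagonal d₁) * Q).mulVec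
        (Pi.single i 1) = - Δ.mulVec (Pi.single i 1) := by
      funext j
      simp only [hΔdef, Matrix.mulVec_single, Pi.neg_apply]
      simp [Matrix.sub_apply, Matrix.smul_apply, Matrix.mul_apply, Matrix.diagonal_apply,
        Matrix.one_apply, sub_mul, ite_mul, mul_ite, Finset.sum_sub_distrib,
        Finset.sum_ite_eq, Finset.sum_ite_eq']
      ring
    rw [h2]
    have h3 : Δ⁻¹.mulVec (- Δ.mulVec (Pi.single i 1)) = - Pi.single i 1 := by
      rw [Matrix.mulVec_neg, Matrix.mulVec_mulVec, hΔinv, Matrix.one_mulVec]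
    rw [h3]
    have h4 : (((d₂ i) • (1 : Matrix (Fin N) (Fin N) ℝ) - Matrix.diagonal d₂)).mulVec
        (- Pi.single i 1) = 0 := by
      rw [Matrix.mulVec_neg, Matrix.sub_mulVec,
        Matrix.smul_mulVec, Matrix.one_mulVec, Matrix.diagonal_mulVec_single]
      funext j
      rcases eq_or_ne j i with rfl | h
      · simp
      · simp [Pi.single_eq_of_ne h]
    rw [h4, Matrix.mulVec_zero, Matrix.mulVec_zero]
end

section
/- Let N ≥ 1 and let B be an N×N real matrix that is diagonalizable over ℝ, i.e., B = T·Λ·T⁻¹ for some invertible real T and real diagonal Λ. Then the 2N×2N companion matrix K = [[0, 1], [−B², −2B]] associated with the squared operator pencil S(λ) = (λ·1 + B)·(λ·1 + B) = λ²·1 + 2λ·B + B² is NOT diagonalizable: there exist no invertible real matrix P and real diagonal matrix D with K = P·D·P⁻¹. (Hence applying a strongly hyperbolic first-order operator twice always yields a weakly hyperbolic second-order system.) -/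
open Matrix
open Polynomial

lemma aeval_conj' {n : Type*} [Fintype n] [DecidableEq n] (P A : Matrix n n ℝ)
    (hP : IsUnit P.det) (p : ℝ[X]) :
    aeval (P * A * P⁻¹) p = P * aeval A p * P⁻¹ := by
  induction p using Polynomial.induction_on with
  | C r =>
      simp only [aeval_C, Matrix.algebraMap_eq_diagonal]
      rw [show Matrix.diagonal ((algebraMap ℝ (n → ℝ)) r) = r • (1 : Matrix n n ℝ) by
        ext i j; by_cases h : i = j <;> simp [Matrix.diagonal, h, Matrix.one_apply]]
      rw [Matrix.mul_smul, Matrix.smul_mul]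
      rw [Matrix.mul_one, Matrix.mul_nonsing_inv P hP]
  | add p q hp hq => simp [hp, hq, Matrix.mul_add, Matrix.add_mul]
  | monomial m r ih =>
      have h1 : C r * X ^ (m + 1) = C r * X ^ m * X := by ring
      rw [h1, _root_.map_mul, ih, aeval_X, _root_.map_mul (aeval A) (C r * X ^ m) X, aeval_X]
      simp only [Matrix.mul_assoc]
      rw [← Matrix.mul_assoc P⁻¹ P, Matrix.nonsing_inv_mul P hP, Matrix.one_mul]

lemma aeval_diagonal' {n : Type*} [Fintype n] [DecidableEq n] (d : n → ℝ) (p : ℝ[X]) :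
    aeval (Matrix.diagonal d) p = Matrix.diagonal (fun i => p.eval (d i)) := by
  induction p using Polynomial.induction_on with
  | C r => simp [Matrix.algebraMap_eq_diagonal]
  | add p q hp hq => simp [hp, hq, Matrix.diagonal_add]
  | monomial m r ih => simp [Matrix.algebraMap_eq_diagonal, Matrix.diagonal_pow,
      Matrix.diagonal_mul_diagonal]

lemma isSemisimple_of_diagonalizable {n : Type*} [Fintype n] [DecidableEq n]
    (A P : Matrix n n ℝ) (d : n → ℝ) (hP : IsUnit P.det)
    (hA : A = P * Matrix.diagonal d * P⁻¹) :
    (Module.End.IsSemisimple (Matrix.toLinAlgEquiv' A : Module.End ℝ (n → ℝ))) := by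
  set p : ℝ[X] := ∏ c ∈ Finset.image d Finset.univ, (X - C c) with hp
  have hsq : Squarefree p :=
    ((separable_prod_X_sub_C_iff' (f := id)).mpr (fun x _ y _ h => h)).squarefree
  have h0 : aeval A p = 0 := by
    rw [hA, aeval_conj' _ _ hP, aeval_diagonal']
    have hz : (fun i => p.eval (d i)) = fun _ => (0 : ℝ) := by
      funext i
      rw [hp, eval_prod]
      exact Finset.prod_eq_zero (Finset.mem_image_of_mem d (Finset.mem_univ i)) (by simp)
    rw [hz]
    simp
  apply Module.End.isSemisimple_of_squarefree_aeval_eq_zero hsq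
  rw [show (Matrix.toLinAlgEquiv' A : Module.End ℝ (n → ℝ))
      = (Matrix.toLinAlgEquiv' (n := n) (R := ℝ)).toAlgHom A from rfl,
    Polynomial.aeval_algHom_apply, h0, map_zero]

/-- if `B = T·Λ·T⁻¹` is diagonalizable over ℝ, then the companion
matrix `K = [[0,1],[−B², −2B]]` of the squared pencil
`S(λ) = (λ·1 + B)² = λ²·1 + 2λ·B + B²` is NOT diagonalizable over ℝ. -/
theorem companion_of_squared_operator_not_diagonalizable
    (N : ℕ) (hN : 1 ≤ N) (B T : Matrix (Fin N) (Fin N) ℝ) (Λ : Fin N → ℝ)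
    (hT : IsUnit T.det) (hB : B = T * Matrix.diagonal Λ * T⁻¹) :
    ¬ ∃ (P : Matrix (Fin N ⊕ Fin N) (Fin N ⊕ Fin N) ℝ) (d : Fin N ⊕ Fin N → ℝ),
        IsUnit P.det ∧
        Matrix.fromBlocks 0 1 (-(B * B)) (-((2 : ℝ) • B)) =
          P * Matrix.diagonal d * P⁻¹ := by
  rintro ⟨P, d, hP, hK⟩
  set K : Matrix (Fin N ⊕ Fin N) (Fin N ⊕ Fin N) ℝ :=
    Matrix.fromBlocks 0 1 (-(B * B)) (-((2 : ℝ) • B)) with hKdef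
  set Q : Matrix (Fin N ⊕ Fin N) (Fin N ⊕ Fin N) ℝ := Matrix.fromBlocks 1 0 (-B) 1 with hQdef
  set Qi : Matrix (Fin N ⊕ Fin N) (Fin N ⊕ Fin N) ℝ := Matrix.fromBlocks 1 0 B 1 with hQidef
  set J : Matrix (Fin N ⊕ Fin N) (Fin N ⊕ Fin N) ℝ :=
    Matrix.fromBlocks (-B) 1 0 (-B) with hJdef
  set Δ : Matrix (Fin N ⊕ Fin N) (Fin N ⊕ Fin N) ℝ :=
    Matrix.fromBlocks (-B) 0 0 (-B) with hΔdef
  have hQiQ : Qi * Q = 1 := by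
    rw [hQdef, hQidef, Matrix.fromBlocks_multiply, ← Matrix.fromBlocks_one]
    norm_num
  have hQQi : Q * Qi = 1 := by
    rw [hQdef, hQidef, Matrix.fromBlocks_multiply, ← Matrix.fromBlocks_one]
    norm_num
  have hQi_det : IsUnit Qi.det := IsUnit.of_mul_eq_one _ (by rw [← Matrix.det_mul, hQiQ, Matrix.det_one])
  have hQi_inv : Qi⁻¹ = Q := Matrix.inv_eq_right_inv hQiQ
  have h2 : ((2 : ℝ) • B) = B + B := two_smul ℝ B
  have hJK : Qi * K * Q = J := by
    rw [hKdef, hQdef, hQidef, hJdef, Matrix.fromBlocks_multiply, Matrix.fromBlocks_multiply]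
    congr 1 <;> simp [h2] <;> noncomm_ring
  have hJd : J = (Qi * P) * Matrix.diagonal d * (Qi * P)⁻¹ := by
    rw [← hJK, hK, Matrix.mul_inv_rev, hQi_inv]
    simp only [Matrix.mul_assoc]
  have hf : Module.End.IsSemisimple (Matrix.toLinAlgEquiv' J : Module.End ℝ (Fin N ⊕ Fin N → ℝ)) :=
    isSemisimple_of_diagonalizable J (Qi * P) d (by rw [Matrix.det_mul]; exact hQi_det.mul hP) hJd
  -- Δ is diagonalizable
  set S : Matrix (Fin N ⊕ Fin N) (Fin N ⊕ Fin N) ℝ := Matrix.fromBlocks T 0 0 T with hSdef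
  have hS_det : IsUnit S.det := by
    rw [hSdef, Matrix.det_fromBlocks_zero₂₁]
    exact hT.mul hT
  have hS_inv : S⁻¹ = Matrix.fromBlocks T⁻¹ 0 0 T⁻¹ := by
    apply Matrix.inv_eq_right_inv
    rw [hSdef, Matrix.fromBlocks_multiply, ← Matrix.fromBlocks_one]
    congr 1 <;> simp [Matrix.mul_nonsing_inv T hT]
  have hΔd : Δ = S * Matrix.diagonal (Sum.elim (fun i => -Λ i) (fun i => -Λ i)) * S⁻¹ := by
    rw [← Matrix.fromBlocks_diagonal, hS_inv, hSdef, hΔdef, Matrix.fromBlocks_multiply,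
      Matrix.fromBlocks_multiply]
    have hTB : T * Matrix.diagonal (fun i => -Λ i) * T⁻¹ = -B := by
      have hdn : Matrix.diagonal (fun i => -Λ i) = -Matrix.diagonal Λ := by
        ext i j; by_cases h : i = j <;> simp [Matrix.diagonal, h]
      rw [hdn, Matrix.mul_neg, Matrix.neg_mul, ← hB]
    congr 1 <;> simp [← hTB, Matrix.mul_assoc]
  have hg : Module.End.IsSemisimple (Matrix.toLinAlgEquiv' Δ : Module.End ℝ (Fin N ⊕ Fin N → ℝ)) :=
    isSemisimple_of_diagonalizable Δ S _ hS_det hΔd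
  have hcommM : J * Δ = Δ * J := by
    rw [hJdef, hΔdef, Matrix.fromBlocks_multiply, Matrix.fromBlocks_multiply]
    congr 1 <;> noncomm_ring
  have hcomm : Commute (Matrix.toLinAlgEquiv' J) (Matrix.toLinAlgEquiv' Δ) := by
    unfold Commute SemiconjBy
    rw [← _root_.map_mul, ← _root_.map_mul, hcommM]
  have hsub := Module.End.IsSemisimple.sub_of_commute hcomm hf hg
  have hnilM : (J - Δ) * (J - Δ) = 0 := by
    rw [hJdef, hΔdef]
    have : Matrix.fromBlocks (-B) 1 0 (-B) - Matrix.fromBlocks (-B) 0 0 (-B)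
        = Matrix.fromBlocks (0 : Matrix (Fin N) (Fin N) ℝ) 1 0 0 := by
      ext i j; rcases i <;> rcases j <;> simp
    rw [this, Matrix.fromBlocks_multiply, ← Matrix.fromBlocks_zero]
    congr 1 <;> simp
  have hnil : IsNilpotent ((Matrix.toLinAlgEquiv' J : Module.End ℝ (Fin N ⊕ Fin N → ℝ))
      - Matrix.toLinAlgEquiv' Δ) := by
    refine ⟨2, ?_⟩
    rw [pow_two, ← _root_.map_sub, ← _root_.map_mul, hnilM, _root_.map_zero]
  have hzero := Module.End.eq_zero_of_isNilpotent_isSemisimple hnil hsub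
  have hJΔ : J - Δ = 0 := by
    apply Matrix.toLinAlgEquiv'.injective
    rw [_root_.map_sub, _root_.map_zero]
    exact hzero
  have : (J - Δ) (Sum.inl ⟨0, hN⟩) (Sum.inr ⟨0, hN⟩) = (0 : ℝ) := by rw [hJΔ]; rfl
  rw [hJdef, hΔdef] at this
  simp [Matrix.fromBlocks, Matrix.sub_apply, Matrix.one_apply] at this
end

section
/- Let g, ĝ, g̃ be symmetric 4×4 real matrices, f̂, f̃ antisymmetric 4×4 real matrices, and set Ĝ = ĝ + f̂, G̃ = g̃ + f̃. For every l ∈ ℝ⁴, the 4×4 matrix P(l) = (lᵀgl)·g − (gl)(gl)ᵀ + (Ĝl)(G̃ᵀl)ᵀ satisfies det P(l) = det(g) · (lᵀgl)² · (lᵀĝl) · (lᵀg̃l). (In index notation: det of the principal symbol P^{bq} = l²g^{qb} − g^{qc}l_c l^b + Ĝ^{ba}l_a G̃^{cq}l_c of gauge-fixed extended electromagnetism equals det(g)·l⁴·l̂²·l̃², with l² = l·g·l, l̂² = l·ĝ·l, l̃² = l·g̃·l.) -/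
open Matrix Polynomial

lemma antisym_quad {n : ℕ} {f : Matrix (Fin n) (Fin n) ℝ} (hf : fᵀ = -f) (l : Fin n → ℝ) :
    l ⬝ᵥ f.mulVec l = 0 := by
  have h : l ⬝ᵥ f.mulVec l = -(l ⬝ᵥ f.mulVec l) := by
    conv_lhs => rw [dotProduct_mulVec, ← mulVec_transpose, hf, neg_mulVec,
      neg_dotProduct, dotProduct_comm]
  linarith

lemma core_det (g ghat gtil fhat ftil : Matrix (Fin 4) (Fin 4) ℝ)
    (hg : gᵀ = g) (hgtil : gtilᵀ = gtil) (hfhat : fhatᵀ = -fhat) (hftil : ftilᵀ = -ftil) (l : Fin 4 → ℝ)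
    (hdet : IsUnit g.det) (hs : l ⬝ᵥ g.mulVec l ≠ 0) :
    ((l ⬝ᵥ g.mulVec l) • g - Matrix.vecMulVec (g.mulVec l) (g.mulVec l) +
        Matrix.vecMulVec ((ghat + fhat).mulVec l) ((gtil + ftil)ᵀ.mulVec l)).det =
      g.det * (l ⬝ᵥ g.mulVec l) ^ 2 * (l ⬝ᵥ ghat.mulVec l) * (l ⬝ᵥ gtil.mulVec l) := by
  set s := l ⬝ᵥ g.mulVec l with hsdef
  set a := g.mulVec l with hadef
  set b := (ghat + fhat).mulVec l with hbdef
  set c := (gtil + ftil)ᵀ.mulVec l with hcdef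
  set U : Matrix (Fin 4) (Fin 2) ℝ := Matrix.of (fun i k => if k = 0 then -a i else b i) with hU
  set W : Matrix (Fin 2) (Fin 4) ℝ := Matrix.of (fun k j => if k = 0 then a j else c j) with hW
  set A : Matrix (Fin 4) (Fin 4) ℝ := s • g with hA
  have hAdet : IsUnit A.det := by
    rw [hA, det_smul]
    exact ((Ne.isUnit hs).pow 4).mul hdet
  have hAinv : A⁻¹ = s⁻¹ • g⁻¹ := by
    apply Matrix.inv_eq_right_inv
    rw [hA, Matrix.smul_mul, Matrix.mul_smul, smul_smul, mul_inv_cancel₀ hs, one_smul,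
      Matrix.mul_nonsing_inv _ hdet]
  -- rewrite as rank-2 update
  have hP : s • g - Matrix.vecMulVec a a + Matrix.vecMulVec b c = A + U * W := by
    have hUW : U * W = -Matrix.vecMulVec a a + Matrix.vecMulVec b c := by
      ext i j
      simp [hU, hW, Matrix.mul_apply, Fin.sum_univ_two, Matrix.vecMulVec_apply]
    rw [hUW, hA, sub_eq_add_neg, add_assoc]
  rw [hP, Matrix.det_add_mul U W hAdet]
  -- key vector identities
  have hla : l ⬝ᵥ a = s := hsdef.symm
  have hal : a ⬝ᵥ l = s := by rw [dotProduct_comm]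
  have hag : a ᵥ* g⁻¹ = l := by
    rw [hadef, Matrix.vecMul_mulVec, hg]
    rw [Matrix.mul_nonsing_inv _ hdet]
    rw [Matrix.vecMul_one]
  have hginva : g⁻¹.mulVec a = l := by
    rw [hadef, Matrix.mulVec_mulVec, Matrix.nonsing_inv_mul _ hdet, Matrix.one_mulVec]
  have hlb : l ⬝ᵥ b = l ⬝ᵥ ghat.mulVec l := by
    rw [hbdef, Matrix.add_mulVec, dotProduct_add, antisym_quad hfhat, add_zero]
  have hcl : c ⬝ᵥ l = l ⬝ᵥ gtil.mulVec l := by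
    rw [dotProduct_comm, hcdef, transpose_add, Matrix.add_mulVec, dotProduct_add, hgtil,
      hftil, neg_mulVec, dotProduct_neg, antisym_quad hftil, neg_zero, add_zero]
  -- entries of the 2x2 matrix
  have mulmul : ∀ (k k' : Fin 2), (W * A⁻¹ * U) k k' = ((W k) ᵥ* A⁻¹) ⬝ᵥ (fun i => U i k') := by
    intro k k'
    simp only [Matrix.mul_apply, vecMul, dotProduct]
  have hW0 : W 0 = a := by funext j; simp [hW]
  have hW1 : W 1 = c := by funext j; simp [hW]
  have hU0 : (fun i => U i 0) = fun i => -a i := by funext i; simp [hU]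
  have hU1 : (fun i => U i 1) = b := by funext i; simp [hU]
  have hsmul : ∀ (x : Fin 4 → ℝ), x ᵥ* A⁻¹ = s⁻¹ • (x ᵥ* g⁻¹) := by
    intro x
    rw [hAinv, ← Matrix.mulVec_transpose, Matrix.transpose_smul, smul_mulVec,
      Matrix.mulVec_transpose]
  have e00 : (W * A⁻¹ * U) 0 0 = -1 := by
    rw [mulmul, hW0, hU0, hsmul, hag]
    show (s⁻¹ • l) ⬝ᵥ (-a) = -1
    rw [dotProduct_neg, smul_dotProduct, hla, smul_eq_mul, inv_mul_cancel₀ hs]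
  have e01 : (W * A⁻¹ * U) 0 1 = s⁻¹ * (l ⬝ᵥ ghat.mulVec l) := by
    rw [mulmul, hW0, hU1, hsmul, hag, smul_dotProduct, hlb, smul_eq_mul]
  have e10 : (W * A⁻¹ * U) 1 0 = -(s⁻¹ * (l ⬝ᵥ gtil.mulVec l)) := by
    rw [mulmul, hW1, hU0, hsmul]
    show (s⁻¹ • (c ᵥ* g⁻¹)) ⬝ᵥ (-a) = _
    rw [dotProduct_neg, smul_dotProduct, ← dotProduct_mulVec, hginva, hcl, smul_eq_mul]
  have hdet2 : (1 + W * A⁻¹ * U).det =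
      s⁻¹ * (l ⬝ᵥ ghat.mulVec l) * (s⁻¹ * (l ⬝ᵥ gtil.mulVec l)) := by
    rw [det_fin_two]
    simp only [Matrix.add_apply, Matrix.one_apply_eq, Matrix.one_apply_ne (by decide : (0 : Fin 2) ≠ 1),
      Matrix.one_apply_ne (by decide : (1 : Fin 2) ≠ 0), e00, e01, e10]
    ring
  rw [hdet2, hA, det_smul]
  have h4 : (Fintype.card (Fin 4)) = 4 := by simp
  rw [h4]
  field_simp

lemma charpoly_eval4 (M : Matrix (Fin 4) (Fin 4) ℝ) (ε : ℝ) :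
    (M.charpoly).eval ε = (ε • (1 : Matrix (Fin 4) (Fin 4) ℝ) - M).det := by
  rw [Matrix.charpoly, ← Polynomial.coe_evalRingHom, RingHom.map_det]
  congr 1
  ext i j
  by_cases h : i = j
  · subst h
    simp [charmatrix_apply_eq, Matrix.one_apply]
  · simp [charmatrix_apply_ne _ _ _ h, Matrix.one_apply, h]

open Filter Topology in
/-- the principal symbol
`P(l) = (lᵀgl)·g − (gl)(gl)ᵀ + (Ĝl)(G̃ᵀl)ᵀ` of gauge-fixed extended
electromagnetism, with `Ĝ = ĝ + f̂`, `G̃ = g̃ + f̃`, satisfies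
`det P(l) = det(g)·(lᵀgl)²·(lᵀĝl)·(lᵀg̃l)`. -/
theorem det_principalSymbol_gaugeFixedMaxwell
    (g ghat gtil fhat ftil : Matrix (Fin 4) (Fin 4) ℝ)
    (hg : gᵀ = g) (hghat : ghatᵀ = ghat) (hgtil : gtilᵀ = gtil)
    (hfhat : fhatᵀ = -fhat) (hftil : ftilᵀ = -ftil) (l : Fin 4 → ℝ) :
    ((l ⬝ᵥ g.mulVec l) • g - Matrix.vecMulVec (g.mulVec l) (g.mulVec l) +
        Matrix.vecMulVec ((ghat + fhat).mulVec l) ((gtil + ftil)ᵀ.mulVec l)).det =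
      g.det * (l ⬝ᵥ g.mulVec l) ^ 2 * (l ⬝ᵥ ghat.mulVec l) * (l ⬝ᵥ gtil.mulVec l) := by
  by_cases hl : l = 0
  · subst hl
    simp
  set G : ℝ → Matrix (Fin 4) (Fin 4) ℝ := fun ε => g + ε • 1 with hGdef
  set L : ℝ → ℝ := fun ε => ((l ⬝ᵥ (G ε).mulVec l) • (G ε) -
      Matrix.vecMulVec ((G ε).mulVec l) ((G ε).mulVec l) +
      Matrix.vecMulVec ((ghat + fhat).mulVec l) ((gtil + ftil)ᵀ.mulVec l)).det with hLdef
  set R : ℝ → ℝ := fun ε => (G ε).det * (l ⬝ᵥ (G ε).mulVec l) ^ 2 *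
      (l ⬝ᵥ ghat.mulVec l) * (l ⬝ᵥ gtil.mulVec l) with hRdef
  have hG0 : G 0 = g := by simp [hGdef]
  suffices h : L 0 = R 0 by
    rw [hLdef, hRdef] at h
    simpa [hG0] using h
  -- continuity
  have hGc : Continuous G := by rw [hGdef]; fun_prop
  have hmv : Continuous (fun ε : ℝ => (G ε).mulVec l) :=
    hGc.matrix_mulVec continuous_const
  have hdp : Continuous (fun ε : ℝ => l ⬝ᵥ (G ε).mulVec l) :=
    continuous_const.dotProduct hmv
  have hLc : Continuous L := by
    rw [hLdef]
    exact (((hdp.smul hGc).sub (hmv.matrix_vecMulVec hmv)).add continuous_const).matrix_det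
  have hRc : Continuous R := by
    rw [hRdef]
    exact ((hGc.matrix_det.mul (hdp.pow 2)).mul continuous_const).mul continuous_const
  -- the bad set is finite
  have hsε : ∀ ε : ℝ, l ⬝ᵥ (G ε).mulVec l = l ⬝ᵥ g.mulVec l + ε * (l ⬝ᵥ l) := by
    intro ε
    simp [hGdef, Matrix.add_mulVec, smul_mulVec, Matrix.one_mulVec, dotProduct_add,
      dotProduct_smul, smul_eq_mul]
  set Z : Set ℝ := {ε : ℝ | (G ε).det = 0 ∨ l ⬝ᵥ (G ε).mulVec l = 0} with hZ
  have hZfin : Z.Finite := by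
    rw [hZ]
    have : {ε : ℝ | (G ε).det = 0 ∨ l ⬝ᵥ (G ε).mulVec l = 0} ⊆
        {ε : ℝ | (G ε).det = 0} ∪ {ε : ℝ | l ⬝ᵥ (G ε).mulVec l = 0} := by
      intro ε hε; exact hε
    apply Set.Finite.subset _ this
    apply Set.Finite.union
    · have hsub : {ε : ℝ | (G ε).det = 0} ⊆ {x | ((-g).charpoly).IsRoot x} := by
        intro ε hε
        simp only [Set.mem_setOf_eq, Polynomial.IsRoot, charpoly_eval4, sub_neg_eq_add] at *
        rw [add_comm]
        exact hε
      exact ((-g).charpoly_monic.ne_zero |> Polynomial.finite_setOf_isRoot).subset hsub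
    · have hc : l ⬝ᵥ l ≠ 0 := fun h => hl (dotProduct_self_eq_zero.mp h)
      have hsub : {ε : ℝ | l ⬝ᵥ (G ε).mulVec l = 0} ⊆
          {-(l ⬝ᵥ g.mulVec l) / (l ⬝ᵥ l)} := by
        intro ε hε
        simp only [Set.mem_setOf_eq, hsε] at hε
        simp only [Set.mem_singleton_iff]
        field_simp
        linarith
      exact (Set.finite_singleton _).subset hsub
  -- eventually equal away from 0
  have hev : ∀ᶠ ε in 𝓝[≠] (0:ℝ), L ε = R ε := by
    have h1 : (Z \ {0})ᶜ ∈ 𝓝 (0:ℝ) :=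
      ((hZfin.subset Set.diff_subset).isClosed.isOpen_compl).mem_nhds (by simp)
    filter_upwards [mem_nhdsWithin_of_mem_nhds h1, self_mem_nhdsWithin] with ε hε hε0
    have hεZ : ε ∉ Z := fun h => hε ⟨h, hε0⟩
    rw [hZ, Set.mem_setOf_eq] at hεZ
    push_neg at hεZ
    obtain ⟨hd, hq⟩ := hεZ
    have hGsym : (G ε)ᵀ = G ε := by
      simp [hGdef, transpose_add, transpose_smul, hg]
    exact core_det (G ε) ghat gtil fhat ftil hGsym hgtil hfhat hftil l
      (isUnit_iff_ne_zero.mpr hd) hq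
  have hL0 : Tendsto L (𝓝[≠] (0:ℝ)) (𝓝 (L 0)) :=
    (hLc.tendsto 0).mono_left nhdsWithin_le_nhds
  have hR0 : Tendsto R (𝓝[≠] (0:ℝ)) (𝓝 (R 0)) :=
    (hRc.tendsto 0).mono_left nhdsWithin_le_nhds
  exact tendsto_nhds_unique (Filter.Tendsto.congr' hev hL0) hR0
end

section
/- Let g, ĝ, g̃ be symmetric 4×4 real matrices, f̂, f̃ antisymmetric 4×4 real matrices, Ĝ = ĝ + f̂, G̃ = g̃ + f̃. Let l, e ∈ ℝ⁴ satisfy lᵀgl = 0 (l is g-null), eᵀgl = 0 (e is g-orthogonal to l), and lᵀg̃l ≠ 0. Then the covector v = e − ((lᵀG̃e)/(lᵀg̃l))·l satisfies P(l)·v = 0, i.e., v lies in the kernel of the principal symbol P(l) = (lᵀgl)·g − (gl)(gl)ᵀ + (Ĝl)(G̃ᵀl)ᵀ. (These are the physical polarization eigenvectors v₁, v₂, w₁, w₂ of the gauge-fixed Maxwell system.) -/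
open Matrix

lemma vecMulVec_mulVec' {n m : Type*} [Fintype m] (w : n → ℝ) (v x : m → ℝ) :
    (Matrix.vecMulVec w v).mulVec x = (v ⬝ᵥ x) • w := by
  ext i
  simp [Matrix.mulVec, Matrix.vecMulVec_apply, dotProduct, Finset.mul_sum, mul_comm,
    mul_left_comm]

/-- if `l` is `g`-null (`lᵀgl = 0`), `e` is `g`-orthogonal to `l`
(`eᵀgl = 0`) and `lᵀg̃l ≠ 0`, then `v = e − ((lᵀG̃e)/(lᵀg̃l))·l` lies in the
kernel of the principal symbol
`P(l) = (lᵀgl)·g − (gl)(gl)ᵀ + (Ĝl)(G̃ᵀl)ᵀ`, where `Ĝ = ĝ + f̂`, `G̃ = g̃ + f̃`. -/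
theorem principalSymbol_physicalPolarization_eigenvector
    (g ghat gtil fhat ftil : Matrix (Fin 4) (Fin 4) ℝ)
    (hg : gᵀ = g) (hghat : ghatᵀ = ghat) (hgtil : gtilᵀ = gtil)
    (hfhat : fhatᵀ = -fhat) (hftil : ftilᵀ = -ftil) (l e : Fin 4 → ℝ)
    (hl : l ⬝ᵥ g.mulVec l = 0) (he : e ⬝ᵥ g.mulVec l = 0)
    (hltil : l ⬝ᵥ gtil.mulVec l ≠ 0) :
    ((l ⬝ᵥ g.mulVec l) • g - Matrix.vecMulVec (g.mulVec l) (g.mulVec l) +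
        Matrix.vecMulVec ((ghat + fhat).mulVec l) ((gtil + ftil)ᵀ.mulVec l)).mulVec
      (e - ((l ⬝ᵥ (gtil + ftil).mulVec e) / (l ⬝ᵥ gtil.mulVec l)) • l) = 0 := by
  set c : ℝ := (l ⬝ᵥ (gtil + ftil).mulVec e) / (l ⬝ᵥ gtil.mulVec l) with hc
  have hftl : l ⬝ᵥ ftil.mulVec l = 0 := by
    have h1 : l ⬝ᵥ ftil.mulVec l = l ⬝ᵥ ftilᵀ.mulVec l := by
      rw [Matrix.mulVec_transpose, Matrix.dotProduct_mulVec, dotProduct_comm]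
    rw [hftil] at h1
    simp [Matrix.neg_mulVec] at h1
    linarith
  have key2 : g.mulVec l ⬝ᵥ (e - c • l) = 0 := by
    rw [dotProduct_sub, dotProduct_smul]
    rw [dotProduct_comm (g.mulVec l) e, he, dotProduct_comm (g.mulVec l) l, hl]
    simp
  have key3 : (gtil + ftil)ᵀ.mulVec l ⬝ᵥ (e - c • l) = 0 := by
    have ht : ∀ x : Fin 4 → ℝ, (gtil + ftil)ᵀ.mulVec l ⬝ᵥ x = l ⬝ᵥ (gtil + ftil).mulVec x := by
      intro x
      rw [Matrix.mulVec_transpose, Matrix.dotProduct_mulVec]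
    rw [dotProduct_sub, dotProduct_smul, ht, ht]
    have hGll : l ⬝ᵥ (gtil + ftil).mulVec l = l ⬝ᵥ gtil.mulVec l := by
      rw [Matrix.add_mulVec, dotProduct_add, hftl, add_zero]
    rw [hGll, hc]
    rw [smul_eq_mul, div_mul_cancel₀ _ hltil, sub_self]
  rw [Matrix.add_mulVec, Matrix.sub_mulVec, hl, zero_smul, Matrix.zero_mulVec,
    vecMulVec_mulVec', vecMulVec_mulVec', key2, key3]
  simp
end

section
/- Let g, ĝ, g̃ be symmetric 4×4 real matrices with g invertible, f̂, f̃ antisymmetric 4×4 real matrices, Ĝ = ĝ + f̂, G̃ = g̃ + f̃, and let l ∈ ℝ⁴ satisfy lᵀĝl = 0 (l is null with respect to the constraint metric ĝ). Define the scalars α = lᵀ(g + G̃·g⁻¹·Ĝ)l and β = lᵀg̃l, and the covector v = g⁻¹·(β·Ĝ − α·g)·l = β·g⁻¹Ĝl − α·l. Then P(l)·v = 0, i.e., v lies in the kernel of the principal symbol P(l) = (lᵀgl)·g − (gl)(gl)ᵀ + (Ĝl)(G̃ᵀl)ᵀ. (These are the constraint-violating characteristic eigenvectors v₄, w₄ of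 the gauge-fixed Maxwell system.) -/
open Matrix

lemma antisym_dot_zero (f : Matrix (Fin 4) (Fin 4) ℝ) (hf : fᵀ = -f) (l : Fin 4 → ℝ) :
    l ⬝ᵥ f.mulVec l = 0 := by
  have h1 : l ⬝ᵥ f.mulVec l = (l ᵥ* f) ⬝ᵥ l := Matrix.dotProduct_mulVec l f l
  have h2 : (l ᵥ* f) ⬝ᵥ l = -(l ⬝ᵥ f.mulVec l) := by
    rw [← Matrix.mulVec_transpose, hf, Matrix.neg_mulVec, neg_dotProduct,
      dotProduct_comm]
  have := h1.trans h2
  linarith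

lemma vecMulVec_mulVec'_s14 (a b x : Fin 4 → ℝ) :
    (Matrix.vecMulVec a b).mulVec x = (b ⬝ᵥ x) • a := by
  ext i
  simp only [Matrix.vecMulVec, Matrix.mulVec, dotProduct, Matrix.of_apply, Pi.smul_apply, smul_eq_mul]
  rw [Finset.sum_mul]
  exact Finset.sum_congr rfl fun j _ => by ring

lemma dot_mulVec_symm (A : Matrix (Fin 4) (Fin 4) ℝ) (x y : Fin 4 → ℝ) :
    (A.mulVec x) ⬝ᵥ y = x ⬝ᵥ Aᵀ.mulVec y := by
  rw [Matrix.dotProduct_mulVec, Matrix.vecMul_transpose]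

/-- suppose `g` is invertible and `l` is null with respect to the
constraint metric `ĝ` (`lᵀĝl = 0`). With `α = lᵀ(g + G̃·g⁻¹·Ĝ)l`, `β = lᵀg̃l`
and `v = g⁻¹·(β·Ĝ − α·g)·l`, the covector `v` lies in the kernel of the
principal symbol `P(l) = (lᵀgl)·g − (gl)(gl)ᵀ + (Ĝl)(G̃ᵀl)ᵀ`, where
`Ĝ = ĝ + f̂`, `G̃ = g̃ + f̃`. -/
theorem principalSymbol_constraintViolating_eigenvector
    (g ghat gtil fhat ftil : Matrix (Fin 4) (Fin 4) ℝ)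
    (hg : gᵀ = g) (hghat : ghatᵀ = ghat) (hgtil : gtilᵀ = gtil)
    (hfhat : fhatᵀ = -fhat) (hftil : ftilᵀ = -ftil)
    (hginv : IsUnit g.det) (l : Fin 4 → ℝ)
    (hl : l ⬝ᵥ ghat.mulVec l = 0) :
    ((l ⬝ᵥ g.mulVec l) • g - Matrix.vecMulVec (g.mulVec l) (g.mulVec l) +
        Matrix.vecMulVec ((ghat + fhat).mulVec l) ((gtil + ftil)ᵀ.mulVec l)).mulVec
      ((g⁻¹ *
          ((l ⬝ᵥ gtil.mulVec l) • (ghat + fhat) -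
            (l ⬝ᵥ ((g + (gtil + ftil) * g⁻¹ * (ghat + fhat)).mulVec l)) • g)).mulVec l) =
      0 := by
  set Gh := ghat + fhat with hGh
  set Gt := gtil + ftil with hGt
  set β := l ⬝ᵥ gtil.mulVec l with hβ
  set α := l ⬝ᵥ ((g + Gt * g⁻¹ * Gh).mulVec l) with hα
  set s := l ⬝ᵥ g.mulVec l with hs
  set v : Fin 4 → ℝ := (g⁻¹ * (β • Gh - α • g)).mulVec l with hv
  have hig : g⁻¹ * g = 1 := Matrix.nonsing_inv_mul g hginv
  have hgi : g * g⁻¹ = 1 := Matrix.mul_nonsing_inv g hginv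
  have hv' : v = β • (g⁻¹.mulVec (Gh.mulVec l)) - α • l := by
    rw [hv, ← Matrix.mulVec_mulVec]
    simp [Matrix.sub_mulVec, Matrix.smul_mulVec, Matrix.mulVec_sub, Matrix.mulVec_smul,
      Matrix.mulVec_mulVec, hig]
  have hgv : g.mulVec v = β • Gh.mulVec l - α • g.mulVec l := by
    rw [hv', Matrix.mulVec_sub, Matrix.mulVec_smul, Matrix.mulVec_smul,
      Matrix.mulVec_mulVec, hgi, Matrix.one_mulVec]
  have hGhnull : l ⬝ᵥ Gh.mulVec l = 0 := by
    rw [hGh, Matrix.add_mulVec, dotProduct_add, hl,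
      antisym_dot_zero fhat hfhat l, add_zero]
  have hGtl : l ⬝ᵥ Gt.mulVec l = β := by
    rw [hGt, Matrix.add_mulVec, dotProduct_add, antisym_dot_zero ftil hftil l,
      add_zero, hβ]
  have key1 : (g.mulVec l) ⬝ᵥ v = -(α * s) := by
    rw [dot_mulVec_symm, hg, hgv, dotProduct_sub, dotProduct_smul,
      dotProduct_smul, hGhnull, ← hs]
    simp [smul_eq_mul]
  have key2 : (Gtᵀ.mulVec l) ⬝ᵥ v = -(β * s) := by
    have h2 : l ⬝ᵥ Gt.mulVec (g⁻¹.mulVec (Gh.mulVec l)) = α - s := by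
      rw [Matrix.mulVec_mulVec, Matrix.mulVec_mulVec]
      have h3 : α = s + l ⬝ᵥ (Gt * g⁻¹ * Gh).mulVec l := by
        rw [hα, Matrix.add_mulVec, dotProduct_add, hs]
      rw [Matrix.mul_assoc] at h3 ⊢
      linarith
    rw [dot_mulVec_symm, Matrix.transpose_transpose, hv', Matrix.mulVec_sub,
      Matrix.mulVec_smul, Matrix.mulVec_smul, dotProduct_sub,
      dotProduct_smul, dotProduct_smul, h2, hGtl]
    simp [smul_eq_mul]
    ring
  rw [Matrix.add_mulVec, Matrix.sub_mulVec, Matrix.smul_mulVec,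
    vecMulVec_mulVec'_s14, vecMulVec_mulVec'_s14, key1, key2, hgv]
  ext i
  simp [smul_eq_mul]
  ring
end
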